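/- arXiv:2110.13078 — 5 statements merged into one kernel-verified Lean document; each statement's English description precedes it below -/
import Mathlib

section
/- Let w be a finite nonempty rich word. Then there exist distinct nonempty palindromes w_1, w_2, …, w_p such that w = w_p w_{p−1} ⋯ w_1 and, for each i = 1, 2, …, p, the word w_i is the longest palindromic suffix of w_p w_{p−1} ⋯ w_i. -/
/-- A finite word is a palindrome if it equals its reversal. -/
def IsPalindrome {A : Type*} (w : List A) : Prop := w.reverse = w

/-- A finite word `w` is rich if it contains `|w| + 1` distinct palindromic
factors, including the empty word. -/
def IsRichWord {A : Type*} (w : List A) : Prop :=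
  {u : List A | u <:+: w ∧ IsPalindrome u}.ncard = w.length + 1

namespace RichAux

open List

variable {A : Type*}

def PalSet (w : List A) : Set (List A) := {u : List A | u <:+: w ∧ IsPalindrome u}

lemma isRich_iff (w : List A) : IsRichWord w ↔ (PalSet w).ncard = w.length + 1 := Iff.rfl

lemma pal_nil : IsPalindrome ([] : List A) := rfl

lemma pal_singleton (a : A) : IsPalindrome [a] := rfl

lemma palSet_finite (w : List A) : (PalSet w).Finite := by
  apply Set.Finite.subset w.sublists.finite_toSet
  intro u hu
  simpa using hu.1.sublist

lemma exists_maxpal (w : List A) :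
    ∃ u, u <:+ w ∧ IsPalindrome u ∧
      ∀ v, v <:+ w → IsPalindrome v → v.length ≤ u.length := by
  have hfin : {u : List A | u <:+ w ∧ IsPalindrome u}.Finite := by
    apply Set.Finite.subset w.tails.finite_toSet
    intro u hu
    simpa [List.mem_tails] using hu.1
  obtain ⟨u, hu, hmax⟩ := Set.Finite.exists_maximalFor List.length _ hfin
    ⟨[], List.nil_suffix, pal_nil⟩
  refine ⟨u, hu.1, hu.2, fun v hv hvp => ?_⟩
  rcases le_total v.length u.length with h | h
  · exact h
  · exact hmax ⟨hv, hvp⟩ h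

lemma suffix_of_suffix_le {u v w : List A} (hu : u <:+ w) (hv : v <:+ w)
    (h : u.length ≤ v.length) : u <:+ v := by
  rw [← List.reverse_prefix] at hu hv ⊢
  exact List.prefix_of_prefix_length_le hu hv (by simpa using h)

lemma suffix_eq_of_length {u v w : List A} (hu : u <:+ w) (hv : v <:+ w)
    (h : u.length = v.length) : u = v :=
  (suffix_of_suffix_le hu hv h.le).eq_of_length h

lemma infix_of_mid {w s u t : List A} {a : A} (h : s ++ u ++ t = w ++ [a])
    (ht : t ≠ []) : u <:+: w := by
  have h1 : s ++ u <+: w ++ [a] := ⟨t, h⟩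
  have hlen : (s ++ u).length ≤ w.length := by
    have := congrArg List.length h
    simp only [List.length_append, List.length_cons, List.length_nil] at this ⊢
    have : t.length ≥ 1 := List.length_pos_iff.2 ht
    omega
  have h2 : s ++ u <+: w :=
    List.prefix_of_prefix_length_le h1 (w.prefix_append [a]) (by simpa using hlen)
  exact ((List.suffix_append s u).isInfix).trans h2.isInfix

lemma pal_infix_concat {w : List A} (a : A) {L : List A} (hLs : L <:+ w ++ [a])
    (hLp : IsPalindrome L)
    (hLmax : ∀ v, v <:+ w ++ [a] → IsPalindrome v → v.length ≤ L.length)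
    {u : List A} (hu : u <:+: w ++ [a]) (hup : IsPalindrome u) : u <:+: w ∨ u = L := by
  obtain ⟨s, t, hst⟩ := hu
  rcases eq_or_ne t [] with rfl | ht
  · -- u is a suffix of w ++ [a]
    have husuf : u <:+ w ++ [a] := ⟨s, by simpa using hst⟩
    rcases eq_or_ne u L with rfl | hne
    · exact Or.inr rfl
    left
    have hlt : u.length < L.length :=
      lt_of_le_of_ne (hLmax u husuf hup)
        (fun h => hne (suffix_eq_of_length husuf hLs h))
    obtain ⟨s', hs'⟩ := suffix_of_suffix_le husuf hLs hlt.le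
    have hupre : u ++ s'.reverse = L := by
      calc u ++ s'.reverse = (s' ++ u).reverse := by
            rw [List.reverse_append, hup]
        _ = L := by rw [hs', hLp]
    have hs'ne : s'.reverse ≠ [] := by
      intro h
      have := congrArg List.length hupre
      simp [h] at this
      omega
    obtain ⟨s₂, hs₂⟩ := hLs
    have : s₂ ++ u ++ s'.reverse = w ++ [a] := by
      rw [List.append_assoc, hupre, hs₂]
    exact infix_of_mid this hs'ne
  · exact Or.inl (infix_of_mid hst ht)

lemma palSet_concat_subset {w : List A} (a : A) {L : List A} (hLs : L <:+ w ++ [a])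
    (hLp : IsPalindrome L)
    (hLmax : ∀ v, v <:+ w ++ [a] → IsPalindrome v → v.length ≤ L.length) :
    PalSet (w ++ [a]) ⊆ insert L (PalSet w) := by
  rintro u ⟨hinf, hpal⟩
  rcases pal_infix_concat a hLs hLp hLmax hinf hpal with h | rfl
  · exact Set.mem_insert_of_mem _ ⟨h, hpal⟩
  · exact Set.mem_insert _ _

lemma ncard_palSet_concat_le (w : List A) (a : A) :
    (PalSet (w ++ [a])).ncard ≤ (PalSet w).ncard + 1 := by
  obtain ⟨L, hLs, hLp, hLmax⟩ := exists_maxpal (w ++ [a])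
  calc (PalSet (w ++ [a])).ncard
      ≤ (insert L (PalSet w)).ncard :=
        Set.ncard_le_ncard (palSet_concat_subset a hLs hLp hLmax)
          ((palSet_finite w).insert L)
    _ ≤ (PalSet w).ncard + 1 := Set.ncard_insert_le _ _

lemma ncard_palSet_le (w : List A) : (PalSet w).ncard ≤ w.length + 1 := by
  induction w using List.reverseRecOn with
  | nil =>
    have hsub : PalSet ([] : List A) ⊆ {[]} := by
      rintro u ⟨hinf, -⟩
      simpa using List.infix_nil.1 hinf
    calc (PalSet ([] : List A)).ncard ≤ ({[]} : Set (List A)).ncard :=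
          Set.ncard_le_ncard hsub (Set.finite_singleton _)
      _ = 1 := Set.ncard_singleton _
      _ ≤ _ := by simp
  | append_singleton w a ih =>
    calc (PalSet (w ++ [a])).ncard ≤ (PalSet w).ncard + 1 := ncard_palSet_concat_le w a
      _ ≤ w.length + 1 + 1 := by omega
      _ = (w ++ [a]).length + 1 := by simp

lemma rich_concat {w : List A} {a : A} (h : IsRichWord (w ++ [a])) :
    IsRichWord w ∧ ∀ L, L <:+ w ++ [a] → IsPalindrome L →
      (∀ v, v <:+ w ++ [a] → IsPalindrome v → v.length ≤ L.length) → ¬ L <:+: w := by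
  rw [isRich_iff] at h
  simp only [List.length_append, List.length_cons, List.length_nil] at h
  have h1 := ncard_palSet_concat_le w a
  have h2 := ncard_palSet_le w
  have heq : (PalSet w).ncard = w.length + 1 := by omega
  refine ⟨heq, ?_⟩
  intro L hLs hLp hLmax hLinf
  have hsub : PalSet (w ++ [a]) ⊆ PalSet w := by
    rintro u ⟨hinf, hpal⟩
    rcases pal_infix_concat a hLs hLp hLmax hinf hpal with hh | rfl
    · exact ⟨hh, hpal⟩
    · exact ⟨hLinf, hLp⟩
  have := Set.ncard_le_ncard hsub (palSet_finite w)
  omega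

lemma rich_prefix (x : List A) (y : List A) (h : IsRichWord (x ++ y)) : IsRichWord x := by
  induction y using List.reverseRecOn with
  | nil => rwa [List.append_nil] at h
  | append_singleton y a ih =>
    apply ih
    rw [← List.append_assoc] at h
    exact (rich_concat h).1

lemma lps_not_infix_dropLast {w : List A} (hw : w ≠ []) (h : IsRichWord w)
    {L : List A} (hLs : L <:+ w) (hLp : IsPalindrome L)
    (hLmax : ∀ v, v <:+ w → IsPalindrome v → v.length ≤ L.length) :
    ¬ L <:+: w.dropLast := by
  have hd : w.dropLast ++ [w.getLast hw] = w := List.dropLast_append_getLast hw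
  refine (rich_concat (w := w.dropLast) (a := w.getLast hw) ?_).2 L ?_ hLp ?_
  · rw [hd]; exact h
  · rw [hd]; exact hLs
  · rw [hd]; exact hLmax

lemma lps_ne_nil {w : List A} (hw : w ≠ []) {L : List A}
    (hLmax : ∀ v, v <:+ w → IsPalindrome v → v.length ≤ L.length) : L ≠ [] := by
  have hs : [w.getLast hw] <:+ w := ⟨w.dropLast, List.dropLast_append_getLast hw⟩
  have h1 : 1 ≤ L.length := by
    have := hLmax _ hs (pal_singleton _)
    simpa using this
  intro h
  simp [h] at h1

lemma main (n : ℕ) : ∀ w : List A, w.length ≤ n → IsRichWord w →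
    ∃ ws : List (List A), ws.Nodup ∧ (∀ u ∈ ws, u ≠ [] ∧ IsPalindrome u) ∧
      w = ws.flatten ∧
      ∀ j (h : j < ws.length),
        ws.get ⟨j, h⟩ <:+ (ws.take (j + 1)).flatten ∧
          ∀ v : List A, v <:+ (ws.take (j + 1)).flatten → IsPalindrome v →
            v.length ≤ (ws.get ⟨j, h⟩).length := by
  induction n with
  | zero =>
    intro w hlen _
    have hw : w = [] := List.length_eq_zero_iff.1 (Nat.le_zero.1 hlen)
    exact ⟨[], by simp, by simp, by simp [hw], fun j h => by simp at h⟩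
  | succ n ih =>
    intro w hlen hrich
    rcases eq_or_ne w [] with rfl | hw
    · exact ⟨[], by simp, by simp, by simp, fun j h => by simp at h⟩
    obtain ⟨L, hLs, hLp, hLmax⟩ := exists_maxpal w
    have hLne : L ≠ [] := lps_ne_nil hw hLmax
    obtain ⟨w', hw'⟩ := hLs
    have hLlen : 1 ≤ L.length := List.length_pos_iff.2 hLne
    have hw'len : w'.length ≤ n := by
      have := congrArg List.length hw'
      simp only [List.length_append] at this
      omega
    have hw'rich : IsRichWord w' := rich_prefix w' L (by rw [hw']; exact hrich)
    obtain ⟨ws', h1, h2, h3, h4⟩ := ih w' hw'len hw'rich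
    have hLnotmem : L ∉ ws' := by
      intro hmem
      obtain ⟨j, hj⟩ := List.get_of_mem hmem
      have h5 := (h4 j.1 j.2).1
      rw [hj] at h5
      have h6 : (ws'.take (j.1 + 1)).flatten <+: w' := by
        rw [h3]
        exact ⟨(ws'.drop (j.1 + 1)).flatten, by
          rw [← List.flatten_append, List.take_append_drop]⟩
      have h7 : L <:+: w' := h5.isInfix.trans h6.isInfix
      have h8 : w' <+: w.dropLast := by
        rw [← hw', List.dropLast_append_of_ne_nil hLne]
        exact ⟨L.dropLast, rfl⟩
      exact lps_not_infix_dropLast hw hrich (⟨w', hw'⟩) hLp hLmax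
        (h7.trans h8.isInfix)
    refine ⟨ws' ++ [L], ?_, ?_, ?_, ?_⟩
    · rw [List.nodup_append]
      exact ⟨h1, List.nodup_singleton L, by simpa using fun a (ha : a ∈ ws') (h : a = L) => hLnotmem (h ▸ ha)⟩
    · intro u hu
      rcases List.mem_append.1 hu with hu | hu
      · exact h2 u hu
      · rw [List.mem_singleton.1 hu]; exact ⟨hLne, hLp⟩
    · rw [List.flatten_append, ← h3]
      simp [hw']
    · intro j h
      have hjlen : j < ws'.length + 1 := by simpa using h
      rcases Nat.lt_succ_iff_lt_or_eq.1 hjlen with hj | hj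
      · have e1 : (ws' ++ [L]).get ⟨j, h⟩ = ws'.get ⟨j, hj⟩ := by
          simp [List.get_eq_getElem, List.getElem_append_left hj]
        have e2 : (ws' ++ [L]).take (j + 1) = ws'.take (j + 1) :=
          List.take_append_of_le_length (by omega)
        rw [e1, e2]
        exact h4 j hj
      · subst hj
        have e1 : (ws' ++ [L]).get ⟨ws'.length, h⟩ = L := by
          simp [List.get_eq_getElem]
        have e2 : ((ws' ++ [L]).take (ws'.length + 1)).flatten = w := by
          rw [List.take_of_length_le (by simp), List.flatten_append, ← h3]
          simp [hw']
        rw [e1, e2]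
        exact ⟨⟨w', hw'⟩, hLmax⟩

end RichAux

/-- Every finite nonempty rich word `w` can be factorized as
`w = w_p w_{p-1} ⋯ w_1` (here `ws = [w_p, w_{p-1}, …, w_1]`) where the `w_i`
are distinct nonempty palindromes and each `w_i` is the longest palindromic
suffix of `w_p w_{p-1} ⋯ w_i`. -/
theorem statement1 {A : Type*} (w : List A) (hw : w ≠ []) (hrich : IsRichWord w) :
    ∃ ws : List (List A),
      ws ≠ [] ∧ ws.Nodup ∧ (∀ u ∈ ws, u ≠ [] ∧ IsPalindrome u) ∧ w = ws.flatten ∧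
        ∀ j (h : j < ws.length),
          ws.get ⟨j, h⟩ <:+ (ws.take (j + 1)).flatten ∧
            ∀ v : List A, v <:+ (ws.take (j + 1)).flatten → IsPalindrome v →
              v.length ≤ (ws.get ⟨j, h⟩).length := by
  obtain ⟨ws, h1, h2, h3, h4⟩ := RichAux.main w.length w le_rfl hrich
  refine ⟨ws, ?_, h1, h2, h3, h4⟩
  intro h
  rw [h] at h3
  simp at h3
  exact hw h3
end

section
/- Let δ = 3/(2(ln 3 − ln 2)) and let q ≥ 1 be the size of the alphabet. If w is a finite or infinite rich word over this alphabet and n is a positive integer, then the factor complexity of w satisfies F_w(n) ≤ (4q²n)^{δ ln(2n) + 2}. -/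
/-- Factor complexity of a finite word: the number of distinct factors of length `n`. -/
noncomputable def FinFactorComplexity {A : Type*} (w : List A) (n : ℕ) : ℕ :=
  {u : List A | u <:+: w ∧ u.length = n}.ncard

/-- `u` is a (finite) factor of the infinite word `x : ℕ → A`. -/
def IsInfFactor {A : Type*} (x : ℕ → A) (u : List A) : Prop :=
  ∃ i : ℕ, u = (List.range u.length).map fun j => x (i + j)

/-- Factor complexity of an infinite word: the number of distinct factors of length `n`. -/
noncomputable def InfFactorComplexity {A : Type*} (x : ℕ → A) (n : ℕ) : ℕ :=
  {u : List A | IsInfFactor x u ∧ u.length = n}.ncard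

/-- An infinite word is rich if all its finite factors are rich. -/
def IsRichInfWord {A : Type*} (x : ℕ → A) : Prop :=
  ∀ u : List A, IsInfFactor x u → IsRichWord u

namespace RichAux

open List

variable {A : Type*}

/-! ### Basic sets -/

/-- Set of palindromic factors. -/
def Pals (w : List A) : Set (List A) := {u | u <:+: w ∧ IsPalindrome u}

/-- Factors of length between 1 and `k`. -/
def FacLe (w : List A) (k : ℕ) : Set (List A) :=
  {u | u <:+: w ∧ 1 ≤ u.length ∧ u.length ≤ k}

/-- Palindromic factors of length between 1 and `k`. -/
def PalLe (w : List A) (k : ℕ) : Set (List A) :=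
  {u | u <:+: w ∧ IsPalindrome u ∧ 1 ≤ u.length ∧ u.length ≤ k}

lemma finite_of_infix (w : List A) (S : Set (List A)) (hS : ∀ u ∈ S, u <:+: w) :
    S.Finite := by
  apply Set.Finite.subset w.sublists.finite_toSet
  intro u hu
  simpa [List.mem_sublists] using (hS u hu).sublist

lemma pals_finite (w : List A) : (Pals w).Finite :=
  finite_of_infix w _ fun _ hu => hu.1

lemma facLe_finite (w : List A) (k : ℕ) : (FacLe w k).Finite :=
  finite_of_infix w _ fun _ hu => hu.1

lemma palLe_finite (w : List A) (k : ℕ) : (PalLe w k).Finite :=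
  finite_of_infix w _ fun _ hu => hu.1

lemma fac_finite (w : List A) (n : ℕ) : {u : List A | u <:+: w ∧ u.length = n}.Finite :=
  finite_of_infix w _ fun _ hu => hu.1

lemma pals_mono {v w : List A} (h : v <:+: w) : Pals v ⊆ Pals w :=
  fun _ hu => ⟨hu.1.trans h, hu.2⟩

lemma pals_nil : Pals ([] : List A) = {[]} := by
  ext u
  constructor
  · rintro ⟨h1, _⟩
    simpa using (List.infix_nil.mp h1)
  · rintro rfl
    exact ⟨List.nil_infix, rfl⟩

/-! ### Longest palindromic suffix -/

lemma exists_pal_drop (w : List A) (hw : w ≠ []) :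
    ∃ k, k < w.length ∧ IsPalindrome (w.drop k) := by
  have hlen : 0 < w.length := List.length_pos_iff.2 hw
  refine ⟨w.length - 1, by omega, ?_⟩
  have h1 : w.dropLast ++ [w.getLast hw] = w := List.dropLast_append_getLast hw
  have h2 : w.drop (w.length - 1) = [w.getLast hw] := by
    have h3 : (w.dropLast ++ [w.getLast hw]).drop w.dropLast.length = [w.getLast hw] :=
      List.drop_left
    rw [h1] at h3
    rw [List.length_dropLast] at h3
    exact h3
  rw [h2]
  simp [IsPalindrome]

/-- Index of the longest palindromic suffix. -/
noncomputable def lpsIdx (w : List A) (hw : w ≠ []) : ℕ :=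
  @Nat.find _ (Classical.decPred _) (exists_pal_drop w hw)

/-- The longest palindromic suffix of a nonempty word. -/
noncomputable def lps (w : List A) (hw : w ≠ []) : List A :=
  w.drop (lpsIdx w hw)

lemma lpsIdx_lt (w : List A) (hw : w ≠ []) : lpsIdx w hw < w.length :=
  (@Nat.find_spec _ (Classical.decPred _) (exists_pal_drop w hw)).1

lemma lps_pal (w : List A) (hw : w ≠ []) : IsPalindrome (lps w hw) :=
  (@Nat.find_spec _ (Classical.decPred _) (exists_pal_drop w hw)).2

lemma lps_suffix (w : List A) (hw : w ≠ []) : lps w hw <:+ w :=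
  List.drop_suffix _ _

lemma lps_length_pos (w : List A) (hw : w ≠ []) : 0 < (lps w hw).length := by
  rw [lps, List.length_drop]
  have := lpsIdx_lt w hw
  omega

lemma lps_ne_nil_s2 (w : List A) (hw : w ≠ []) : lps w hw ≠ [] := by
  have := lps_length_pos w hw
  intro h
  rw [h] at this
  simp at this

/-- Any nonempty palindromic suffix is a suffix of the lps. -/
lemma suffix_lps (w : List A) (hw : w ≠ []) {p : List A} (hp : p <:+ w)
    (hpne : p ≠ []) (hppal : IsPalindrome p) : p <:+ lps w hw := by
  obtain ⟨t, ht⟩ := hp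
  have hdrop : w.drop t.length = p := by rw [← ht]; exact List.drop_left
  have hlt : t.length < w.length := by
    have : t.length + p.length = w.length := by rw [← ht]; simp
    have : 0 < p.length := List.length_pos_iff.2 hpne
    omega
  have hfind : lpsIdx w hw ≤ t.length :=
    @Nat.find_min' _ (Classical.decPred _) (exists_pal_drop w hw) _
      ⟨hlt, by rw [hdrop]; exact hppal⟩
  have : p = (lps w hw).drop (t.length - lpsIdx w hw) := by
    rw [lps, List.drop_drop, show lpsIdx w hw + (t.length - lpsIdx w hw) = t.length by omega,
      hdrop]
  rw [this]
  exact List.drop_suffix _ _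

/-! ### The key insertion identity for palindromic factor sets -/

lemma concat_ne_nil' (v : List A) (a : A) : v ++ [a] ≠ [] := by simp

/-- Appending one letter adds exactly (at most) the new lps as palindromic factor. -/
theorem pals_insert (v : List A) (a : A) :
    Pals (v ++ [a]) = insert (lps (v ++ [a]) (concat_ne_nil' v a)) (Pals v) := by
  set w := v ++ [a] with hw
  set s := lps w (concat_ne_nil' v a) with hs
  apply Set.eq_of_subset_of_subset
  · rintro u ⟨⟨x, y, hxy⟩, hupal⟩
    rcases List.eq_nil_or_concat y with hy | ⟨Y, b, hy⟩
    · -- u is a suffix of w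
      subst hy
      have husuf : u <:+ w := ⟨x, by simpa using hxy⟩
      by_cases hune : u = []
      · subst hune
        right
        exact ⟨List.nil_infix, rfl⟩
      · have h1 : u <:+ s := suffix_lps w _ husuf hune hupal
        by_cases heq : u = s
        · left; exact heq
        · -- u is a proper suffix of the palindrome s, hence a prefix of s,
          -- hence occurs in v
          obtain ⟨z, hz⟩ := h1
          have hzne : z ≠ [] := by
            intro h
            rw [h] at hz
            simp at hz
            exact heq hz
          have hpref : s = u ++ z.reverse := by
            have h2 : s.reverse = s := lps_pal w _
            calc s = s.reverse := h2.symm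
            _ = (z ++ u).reverse := by rw [hz]
            _ = u.reverse ++ z.reverse := by simp
            _ = u ++ z.reverse := by rw [hupal]
          obtain ⟨t, ht⟩ := lps_suffix w (concat_ne_nil' v a)
          -- w = t ++ s = t ++ u ++ z.reverse
          have hw2 : t ++ u ++ z.reverse = v ++ [a] := by
            rw [List.append_assoc, ← hpref]
            exact ht
          rcases List.eq_nil_or_concat z.reverse with hzr | ⟨Z, c, hzr⟩
          · exact absurd (by simpa using congrArg List.reverse hzr) hzne
          · rw [hzr] at hw2
            have : (t ++ u ++ Z) ++ [c] = v ++ [a] := by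
              simpa [List.concat_eq_append, List.append_assoc] using hw2
            have hv : t ++ u ++ Z = v := (List.append_inj' this rfl).1
            right
            exact ⟨⟨t, Z, by rw [← hv]⟩, hupal⟩
    · -- u occurs inside v
      subst hy
      have : (x ++ u ++ Y) ++ [b] = v ++ [a] := by
        simpa [List.concat_eq_append, List.append_assoc] using hxy
      have hv : x ++ u ++ Y = v := (List.append_inj' this rfl).1
      right
      exact ⟨⟨x, Y, by rw [← hv]⟩, hupal⟩
  · intro u hu
    rcases hu with rfl | hu
    · exact ⟨(lps_suffix w (concat_ne_nil' v a)).isInfix, lps_pal w _⟩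
    · exact ⟨hu.1.trans (List.prefix_append v [a]).isInfix, hu.2⟩

/-! ### Cardinality facts about palindromic factors -/

lemma ncard_pals_le (v : List A) : (Pals v).ncard ≤ v.length + 1 := by
  induction v using List.reverseRecOn with
  | nil => simp [pals_nil]
  | append_singleton v a ih =>
    rw [pals_insert]
    calc (insert (lps (v ++ [a]) (concat_ne_nil' v a)) (Pals v)).ncard
        ≤ (Pals v).ncard + 1 := Set.ncard_insert_le _ _
      _ ≤ (v.length + 1) + 1 := by omega
      _ = (v ++ [a]).length + 1 := by simp

lemma ncard_pals_append_le (v t : List A) :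
    (Pals (v ++ t)).ncard ≤ (Pals v).ncard + t.length := by
  induction t using List.reverseRecOn with
  | nil => simp
  | append_singleton t a ih =>
    rw [← List.append_assoc, pals_insert]
    calc (insert _ (Pals (v ++ t))).ncard
        ≤ (Pals (v ++ t)).ncard + 1 := Set.ncard_insert_le _ _
      _ ≤ ((Pals v).ncard + t.length) + 1 := by omega
      _ = (Pals v).ncard + (t ++ [a]).length := by simp; omega

lemma take_ne_nil {w : List A} {e : ℕ} (h1 : 1 ≤ e) (hwne : w ≠ []) :
    w.take e ≠ [] := by
  have hw : 0 < w.length := List.length_pos_iff.2 hwne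
  intro h
  have h2 : min e w.length = 0 := by
    simpa [List.length_take] using congrArg List.length h
  omega

lemma lps_congr {l l' : List A} (h : l = l') (h1 : l ≠ []) (h2 : l' ≠ []) :
    lps l h1 = lps l' h2 := by subst h; rfl

/-- In a rich word, the lps at each prefix boundary is a *new* palindrome. -/
theorem rich_lps_new {w : List A} (hw : IsRichWord w) {e : ℕ} (h1 : 1 ≤ e)
    (h2 : e ≤ w.length) (hwne : w ≠ []) :
    lps (w.take e) (take_ne_nil h1 hwne) ∉ Pals (w.take (e - 1)) := by
  intro hmem
  obtain ⟨m, rfl⟩ : ∃ m, e = m + 1 := ⟨e - 1, by omega⟩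
  have hm : m < w.length := by omega
  have hsplit : w.take (m + 1) = w.take m ++ [w.get ⟨m, hm⟩] := by
    rw [List.take_succ]
    simp [List.getElem?_eq_getElem hm]
  have hins : Pals (w.take (m + 1)) = insert (lps (w.take (m+1)) (take_ne_nil h1 hwne))
      (Pals (w.take m)) := by
    have h0 := pals_insert (w.take m) (w.get ⟨m, hm⟩)
    have h2 : Pals (w.take (m+1)) = Pals (w.take m ++ [w.get ⟨m, hm⟩]) := by rw [hsplit]
    have h3 : lps (w.take (m+1)) (take_ne_nil h1 hwne) =
        lps (w.take m ++ [w.get ⟨m, hm⟩]) (concat_ne_nil' _ _) := lps_congr hsplit _ _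
    rw [h2, h3, h0]
  have hpalseq : Pals (w.take (m + 1)) = Pals (w.take m) := by
    rw [hins]
    apply Set.insert_eq_self.2
    simpa using hmem
  have hbound : (Pals w).ncard ≤ (Pals (w.take m)).ncard + (w.length - (m + 1)) := by
    conv_lhs => rw [← List.take_append_drop (m+1) w]
    calc (Pals (w.take (m+1) ++ w.drop (m+1))).ncard
        ≤ (Pals (w.take (m+1))).ncard + (w.drop (m+1)).length :=
          ncard_pals_append_le _ _
      _ = (Pals (w.take m)).ncard + (w.drop (m+1)).length := by rw [hpalseq]
      _ = (Pals (w.take m)).ncard + (w.length - (m+1)) := by rw [List.length_drop]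
  have hup : (Pals (w.take m)).ncard ≤ m + 1 := by
    calc (Pals (w.take m)).ncard ≤ (w.take m).length + 1 := ncard_pals_le _
      _ = m + 1 := by rw [List.length_take]; omega
  have hrich : (Pals w).ncard = w.length + 1 := hw
  omega

lemma pals_take_mono (w : List A) {i j : ℕ} (hij : i ≤ j) :
    Pals (w.take i) ⊆ Pals (w.take j) := by
  apply pals_mono
  have : w.take i = (w.take j).take i := by
    rw [List.take_take, min_eq_left hij]
  rw [this]
  exact (List.take_prefix _ _).isInfix

/-- In a rich word, the lps determines the boundary position. -/
theorem lps_det {w : List A} (hw : IsRichWord w) (hwne : w ≠ []) {e₁ e₂ : ℕ}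
    (h11 : 1 ≤ e₁) (h12 : e₁ ≤ w.length) (h21 : 1 ≤ e₂) (h22 : e₂ ≤ w.length)
    (heq : lps (w.take e₁) (take_ne_nil h11 hwne) = lps (w.take e₂) (take_ne_nil h21 hwne)) :
    e₁ = e₂ := by
  by_contra hne
  have key : ∀ f₁ f₂ : ℕ, ∀ (g11 : 1 ≤ f₁) (g12 : f₁ ≤ w.length) (g21 : 1 ≤ f₂)
      (g22 : f₂ ≤ w.length), f₁ < f₂ →
      lps (w.take f₁) (take_ne_nil g11 hwne) = lps (w.take f₂) (take_ne_nil g21 hwne) →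
      False := by
    intro f₁ f₂ g11 g12 g21 g22 hlt heq'
    have h1 : lps (w.take f₁) (take_ne_nil g11 hwne) ∈ Pals (w.take f₁) :=
      ⟨(lps_suffix _ _).isInfix, lps_pal _ _⟩
    have h2 : Pals (w.take f₁) ⊆ Pals (w.take (f₂ - 1)) :=
      pals_take_mono w (by omega)
    exact rich_lps_new hw g21 g22 hwne (heq' ▸ h2 h1)
  rcases lt_or_gt_of_ne hne with h | h
  · exact key e₁ e₂ h11 h12 h21 h22 h heq
  · exact key e₂ e₁ h21 h22 h11 h12 h heq.symm

/-! ### First occurrence -/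

lemma occ_exists {u w : List A} (h : u <:+: w) : ∃ e, u <:+ w.take e := by
  obtain ⟨x, y, hxy⟩ := h
  refine ⟨x.length + u.length, x, ?_⟩
  have h2 : (x ++ u ++ y).take (x ++ u).length = x ++ u := by
    rw [List.append_assoc]
    have : List.take (x ++ u).length ((x ++ u) ++ y) = x ++ u := List.take_left
    rw [List.append_assoc] at this
    exact this
  rw [hxy] at h2
  rw [← h2, List.length_append]

/-- End position of the first occurrence of `u` in `w`. -/
noncomputable def focc (w u : List A) (h : u <:+: w) : ℕ :=
  @Nat.find _ (Classical.decPred _) (occ_exists h)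

lemma focc_spec (w u : List A) (h : u <:+: w) : u <:+ w.take (focc w u h) :=
  @Nat.find_spec _ (Classical.decPred _) (occ_exists h)

lemma focc_min (w u : List A) (h : u <:+: w) {i : ℕ} (hi : i < focc w u h) :
    ¬ u <:+ w.take i :=
  @Nat.find_min _ (Classical.decPred _) (occ_exists h) _ hi

lemma focc_min' (w u : List A) (h : u <:+: w) {i : ℕ} (hocc : u <:+ w.take i) :
    focc w u h ≤ i :=
  @Nat.find_min' _ (Classical.decPred _) (occ_exists h) _ hocc

lemma focc_le_length (w u : List A) (h : u <:+: w) : focc w u h ≤ w.length := by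
  obtain ⟨x, y, hxy⟩ := id h
  have hle : x.length + u.length ≤ w.length := by
    rw [← hxy]; simp [List.length_append]
  have hocc : u <:+ w.take (x.length + u.length) := by
    refine ⟨x, ?_⟩
    have h2 : (x ++ u ++ y).take (x ++ u).length = x ++ u := by
      rw [List.append_assoc]
      have : List.take (x ++ u).length ((x ++ u) ++ y) = x ++ u := List.take_left
      rw [List.append_assoc] at this
      exact this
    rw [hxy] at h2
    rw [← h2, List.length_append]
  exact le_trans (focc_min' w u h hocc) hle

lemma length_le_focc (w u : List A) (h : u <:+: w) : u.length ≤ focc w u h := by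
  have h1 := focc_spec w u h
  have h2 := h1.sublist.length_le
  rw [List.length_take] at h2
  omega

lemma w_ne_nil_of_focc {w u : List A} (h : u <:+: w) (hne : u ≠ []) : w ≠ [] := by
  intro hw
  subst hw
  exact hne (List.infix_nil.mp h)

lemma focc_pos {w u : List A} (h : u <:+: w) (hne : u ≠ []) : 1 ≤ focc w u h := by
  have := length_le_focc w u h
  have := List.length_pos_iff.2 hne
  omega

/-- helper: a suffix of a list, written via drop. -/
lemma suffix_eq_drop {u p : List A} (h : u <:+ p) : u = p.drop (p.length - u.length) := by
  obtain ⟨z, hz⟩ := h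
  have hlen : z.length + u.length = p.length := by rw [← hz]; simp
  have h1 : (z ++ u).drop z.length = u := List.drop_left
  rw [hz] at h1
  rw [show p.length - u.length = z.length by omega]
  exact h1.symm

lemma suffix_of_suffix_le_s2 {u s p : List A} (hu : u <:+ p) (hs : s <:+ p)
    (hle : u.length ≤ s.length) : u <:+ s := by
  obtain ⟨z, hz⟩ := hu
  obtain ⟨t, ht⟩ := hs
  have hlz : z.length + u.length = p.length := by rw [← hz]; simp
  have hlt : t.length + s.length = p.length := by rw [← ht]; simp
  refine ⟨z.drop t.length, ?_⟩
  have h2 : (z ++ u).drop t.length = z.drop t.length ++ u :=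
    List.drop_append_of_le_length (by omega)
  have h3 : (z ++ u).drop t.length = (t ++ s).drop t.length := by rw [hz, ht]
  have h1 : (t ++ s).drop t.length = s := List.drop_left
  rw [h2, h1] at h3
  exact h3

/-! ### The reflection argument -/

/-- If the lps at the first occurrence of `u` is longer than `u`, then the
reversal of `u` occurs, ending strictly earlier. -/
theorem reflect {w u : List A} (hu : u <:+: w) (hne : u ≠ [])
    (hlong : u.length <
      (lps (w.take (focc w u hu)) (take_ne_nil (focc_pos hu hne) (w_ne_nil_of_focc hu hne))).length) :
    ∃ e', e' < focc w u hu ∧ u.reverse <:+ w.take e' := by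
  set e := focc w u hu with he
  set p := w.take e with hp
  have hpne : p ≠ [] := take_ne_nil (focc_pos hu hne) (w_ne_nil_of_focc hu hne)
  set s := lps p hpne with hs
  have hple : p.length = e := by
    rw [hp, List.length_take]
    have := focc_le_length w u hu
    omega
  have husuf : u <:+ p := focc_spec w u hu
  have hssuf : s <:+ p := lps_suffix p hpne
  have hus : u <:+ s := suffix_of_suffix_le_s2 husuf hssuf (le_of_lt hlong)
  obtain ⟨z, hz⟩ := hus
  have hrev : s = u.reverse ++ z.reverse := by
    have h2 : s.reverse = s := lps_pal p hpne
    calc s = s.reverse := h2.symm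
      _ = (z ++ u).reverse := by rw [hz]
      _ = u.reverse ++ z.reverse := by simp
  obtain ⟨t, ht⟩ := hssuf
  have hslen : s.length ≤ e := by
    have h5 : t.length + s.length = p.length := by rw [← ht]; simp
    omega
  refine ⟨t.length + u.length, ?_, ?_⟩
  · have htlen : t.length = e - s.length := by
      have : t.length + s.length = p.length := by rw [← ht]; simp
      omega
    omega
  · refine ⟨t, ?_⟩
    have h3 : w.take (t.length + u.length) = p.take (t.length + u.length) := by
      rw [hp, List.take_take]
      congr 1
      have htlen : t.length + s.length = p.length := by rw [← ht]; simp
      rw [Nat.min_def]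
      split <;> omega
    rw [h3, ← ht, hrev, ← List.append_assoc]
    have h4 : (t ++ u.reverse).length = t.length + u.length := by simp
    rw [← h4]
    exact List.take_left.symm

/-! ### The map `Φ` from factors to short palindromic factors -/

/-- `phi w u` is the lps at the first occurrence of `u` in `w`. -/
noncomputable def phi (w u : List A) : List A :=
  @dite _ (u <:+: w ∧ u ≠ []) (Classical.dec _)
    (fun h => lps (w.take (focc w u h.1))
      (take_ne_nil (focc_pos h.1 h.2) (w_ne_nil_of_focc h.1 h.2)))
    (fun _ => [])

lemma phi_eq {w u : List A} (h1 : u <:+: w) (h2 : u ≠ []) :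
    phi w u = lps (w.take (focc w u h1))
      (take_ne_nil (focc_pos h1 h2) (w_ne_nil_of_focc h1 h2)) := by
  rw [phi, dif_pos ⟨h1, h2⟩]

lemma phi_pal {w u : List A} (h1 : u <:+: w) (h2 : u ≠ []) : IsPalindrome (phi w u) := by
  rw [phi_eq h1 h2]; exact lps_pal _ _

lemma phi_infix {w u : List A} (h1 : u <:+: w) (h2 : u ≠ []) : phi w u <:+: w := by
  rw [phi_eq h1 h2]
  exact ((lps_suffix _ _).isInfix).trans (List.take_prefix _ _).isInfix

lemma phi_length_pos {w u : List A} (h1 : u <:+: w) (h2 : u ≠ []) :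
    0 < (phi w u).length := by
  rw [phi_eq h1 h2]; exact lps_length_pos _ _

/-- `phi` together with the length determines the factor (in a rich word). -/
theorem phi_inj {w : List A} (hw : IsRichWord w) {u v : List A}
    (hu : u <:+: w) (hune : u ≠ []) (hv : v <:+: w) (hvne : v ≠ [])
    (hphi : phi w u = phi w v) (hlen : u.length = v.length) : u = v := by
  have hwne : w ≠ [] := w_ne_nil_of_focc hu hune
  rw [phi_eq hu hune, phi_eq hv hvne] at hphi
  have he : focc w u hu = focc w v hv :=
    lps_det hw hwne (focc_pos hu hune) (focc_le_length w u hu)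
      (focc_pos hv hvne) (focc_le_length w v hv) hphi
  have h1 : u = (w.take (focc w u hu)).drop ((w.take (focc w u hu)).length - u.length) :=
    suffix_eq_drop (focc_spec w u hu)
  have h2 : v = (w.take (focc w v hv)).drop ((w.take (focc w v hv)).length - v.length) :=
    suffix_eq_drop (focc_spec w v hv)
  rw [h1, h2, he, hlen]

/-! ### Counting helper -/

lemma ncard_le_mul {α β : Type*} (S : Set α) (T : Set β) (hT : T.Finite) (n : ℕ)
    (f : α → β) (g : α → ℕ)
    (hf : ∀ a ∈ S, f a ∈ T) (hg : ∀ a ∈ S, 1 ≤ g a ∧ g a ≤ n)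
    (hinj : ∀ a ∈ S, ∀ b ∈ S, f a = f b → g a = g b → a = b) :
    S.ncard ≤ n * T.ncard := by
  classical
  set tar : Finset (β × ℕ) := hT.toFinset ×ˢ Finset.Icc 1 n with htar
  have h1 : S.ncard ≤ (↑tar : Set (β × ℕ)).ncard := by
    refine Set.ncard_le_ncard_of_injOn (fun a => (f a, g a)) ?_ ?_ tar.finite_toSet
    · intro a ha
      simp only [htar, Finset.coe_product, Set.mem_prod, Set.Finite.coe_toFinset,
        Finset.coe_Icc, Set.mem_Icc]
      exact ⟨hf a ha, hg a ha⟩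
    · intro a ha b hb hab
      exact hinj a ha b hb (congrArg Prod.fst hab) (congrArg Prod.snd hab)
  rw [Set.ncard_coe_finset, htar, Finset.card_product, Nat.card_Icc] at h1
  have h2 : hT.toFinset.card = T.ncard := (Set.ncard_eq_toFinset_card T hT).symm
  calc S.ncard ≤ hT.toFinset.card * (n + 1 - 1) := h1
    _ = n * T.ncard := by rw [h2, Nat.add_sub_cancel, Nat.mul_comm]

/-! ### Step 1: factors are controlled by short palindromic factors -/

theorem step1 {w : List A} (hw : IsRichWord w) (n : ℕ) :
    (FacLe w n).ncard ≤ 2 * (n * (PalLe w n).ncard) := by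
  classical
  set S₁ : Set (List A) := {u ∈ FacLe w n | (phi w u).length ≤ u.length} with hS₁
  set S₂ : Set (List A) := {u ∈ FacLe w n | ¬ (phi w u).length ≤ u.length} with hS₂
  have hsplit : FacLe w n = S₁ ∪ S₂ := by
    ext u
    constructor
    · intro hu
      by_cases h : (phi w u).length ≤ u.length
      · exact Or.inl ⟨hu, h⟩
      · exact Or.inr ⟨hu, h⟩
    · rintro (⟨hu, _⟩ | ⟨hu, _⟩) <;> exact hu
  have hne_of_mem : ∀ u ∈ FacLe w n, u ≠ [] := by
    intro u hu h
    rcases hu with ⟨_, h1, _⟩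
    rw [h] at h1
    simp at h1
  have hc1 : S₁.ncard ≤ n * (PalLe w n).ncard := by
    apply ncard_le_mul S₁ (PalLe w n) (palLe_finite w n) n (phi w) List.length
    · rintro u ⟨hu, hphil⟩
      have hune := hne_of_mem u hu
      exact ⟨phi_infix hu.1 hune, phi_pal hu.1 hune,
        phi_length_pos hu.1 hune, le_trans hphil hu.2.2⟩
    · rintro u ⟨hu, _⟩
      exact ⟨hu.2.1, hu.2.2⟩
    · rintro u ⟨hu, _⟩ v ⟨hv, _⟩ hphi hlen
      exact phi_inj hw hu.1 (hne_of_mem u hu) hv.1 (hne_of_mem v hv) hphi hlen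
  have hrev_facts : ∀ u ∈ S₂, u.reverse <:+: w ∧ u.reverse ≠ [] ∧
      (phi w u.reverse).length ≤ u.length := by
    rintro u ⟨hu, hphil⟩
    have hune := hne_of_mem u hu
    push_neg at hphil
    rw [phi_eq hu.1 hune] at hphil
    obtain ⟨e', he'lt, he'suf⟩ := reflect hu.1 hune hphil
    have hrev_infix : u.reverse <:+: w :=
      (he'suf.isInfix).trans (List.take_prefix _ _).isInfix
    have hrevne : u.reverse ≠ [] := by simpa using hune
    refine ⟨hrev_infix, hrevne, ?_⟩
    have hfocc_rev : focc w u.reverse hrev_infix ≤ e' := focc_min' w _ _ he'suf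
    by_contra hcon
    push_neg at hcon
    rw [phi_eq hrev_infix hrevne] at hcon
    have hcon' : u.reverse.length <
        (lps (w.take (focc w u.reverse hrev_infix))
          (take_ne_nil (focc_pos hrev_infix hrevne) (w_ne_nil_of_focc hrev_infix hrevne))).length := by
      simpa using hcon
    obtain ⟨e'', he''lt, he''suf⟩ := reflect hrev_infix hrevne hcon'
    rw [List.reverse_reverse] at he''suf
    have : focc w u hu.1 ≤ e'' := focc_min' w _ _ he''suf
    omega
  have hc2 : S₂.ncard ≤ n * (PalLe w n).ncard := by
    apply ncard_le_mul S₂ (PalLe w n) (palLe_finite w n) n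
      (fun u => phi w u.reverse) List.length
    · intro u hu
      obtain ⟨hinf, hne, hlen⟩ := hrev_facts u hu
      rcases hu with ⟨hu', _⟩
      exact ⟨phi_infix hinf hne, phi_pal hinf hne, phi_length_pos hinf hne,
        le_trans hlen hu'.2.2⟩
    · rintro u ⟨hu, _⟩
      exact ⟨hu.2.1, hu.2.2⟩
    · intro u hu v hv hphi hlen
      obtain ⟨hinfu, hneu, _⟩ := hrev_facts u hu
      obtain ⟨hinfv, hnev, _⟩ := hrev_facts v hv
      have : u.reverse = v.reverse :=
        phi_inj hw hinfu hneu hinfv hnev hphi (by simpa using hlen)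
      simpa using congrArg List.reverse this
  calc (FacLe w n).ncard = (S₁ ∪ S₂).ncard := by rw [hsplit]
    _ ≤ S₁.ncard + S₂.ncard := Set.ncard_union_le _ _
    _ ≤ n * (PalLe w n).ncard + n * (PalLe w n).ncard := by omega
    _ = 2 * (n * (PalLe w n).ncard) := by ring

/-! ### Step 2: palindromes are determined by their first half -/

lemma pal_reconstruct {s : List A} (hs : IsPalindrome s) :
    s = s.take ((s.length + 1) / 2) ++
      ((s.take ((s.length + 1) / 2)).take (s.length - (s.length + 1) / 2)).reverse := by
  set k := (s.length + 1) / 2 with hk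
  have hkle : k ≤ s.length := by omega
  have h1 : s.drop k = (s.take (s.length - k)).reverse := by
    have h2 : (s.drop k).reverse = s.take (s.length - k) := by
      rw [List.reverse_drop, hs]
    rw [← h2, List.reverse_reverse]
  have h3 : s.take (s.length - k) = (s.take k).take (s.length - k) := by
    rw [List.take_take, min_eq_left (by omega)]
  conv_lhs => rw [← List.take_append_drop k s]
  rw [h1, h3]

theorem step2 (w : List A) (n : ℕ) :
    (PalLe w n).ncard ≤ 2 * (FacLe w ((n + 1) / 2)).ncard := by
  classical
  set P₀ : Set (List A) := {s ∈ PalLe w n | s.length % 2 = 0} with hP₀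
  set P₁ : Set (List A) := {s ∈ PalLe w n | s.length % 2 = 1} with hP₁
  have hsplit : PalLe w n = P₀ ∪ P₁ := by
    ext s
    have : s.length % 2 = 0 ∨ s.length % 2 = 1 := by omega
    simp [hP₀, hP₁]
    tauto
  have hhalf : ∀ s ∈ PalLe w n, s.take ((s.length + 1) / 2) ∈ FacLe w ((n + 1) / 2) := by
    rintro s ⟨hinf, hpal, h1, h2⟩
    refine ⟨(List.take_prefix _ _).isInfix.trans hinf, ?_, ?_⟩
    · rw [List.length_take]
      have : 1 ≤ (s.length + 1) / 2 := by omega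
      rw [Nat.min_def]
      split <;> omega
    · rw [List.length_take]
      have : (s.length + 1) / 2 ≤ (n + 1) / 2 := by omega
      rw [Nat.min_def]
      split <;> omega
  have hinj : ∀ r : ℕ, ∀ s₁ ∈ PalLe w n, ∀ s₂ ∈ PalLe w n,
      s₁.length % 2 = r → s₂.length % 2 = r →
      s₁.take ((s₁.length + 1) / 2) = s₂.take ((s₂.length + 1) / 2) → s₁ = s₂ := by
    intro r s₁ hs₁ s₂ hs₂ hr₁ hr₂ htake
    have hlen₁ : (s₁.take ((s₁.length + 1) / 2)).length = (s₁.length + 1) / 2 := by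
      rw [List.length_take, Nat.min_def]; split <;> omega
    have hlen₂ : (s₂.take ((s₂.length + 1) / 2)).length = (s₂.length + 1) / 2 := by
      rw [List.length_take, Nat.min_def]; split <;> omega
    have heqhalf : (s₁.length + 1) / 2 = (s₂.length + 1) / 2 := by
      rw [← hlen₁, ← hlen₂, htake]
    have hleneq : s₁.length = s₂.length := by omega
    calc s₁ = s₁.take ((s₁.length + 1) / 2) ++
        ((s₁.take ((s₁.length + 1) / 2)).take (s₁.length - (s₁.length + 1) / 2)).reverse :=
          pal_reconstruct hs₁.2.1
      _ = s₂.take ((s₂.length + 1) / 2) ++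
        ((s₂.take ((s₂.length + 1) / 2)).take (s₂.length - (s₂.length + 1) / 2)).reverse := by
          rw [htake, hleneq]
      _ = s₂ := (pal_reconstruct hs₂.2.1).symm
  have hc : ∀ (P : Set (List A)) (r : ℕ), P ⊆ PalLe w n →
      (∀ s ∈ P, s.length % 2 = r) → P.ncard ≤ (FacLe w ((n + 1) / 2)).ncard := by
    intro P r hsub hparity
    refine Set.ncard_le_ncard_of_injOn (fun s => s.take ((s.length + 1) / 2))
      ?_ ?_ (facLe_finite w _)
    · intro s hs
      exact hhalf s (hsub hs)
    · intro s₁ h₁ s₂ h₂ heq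
      exact hinj r s₁ (hsub h₁) s₂ (hsub h₂) (hparity s₁ h₁) (hparity s₂ h₂) heq
  calc (PalLe w n).ncard = (P₀ ∪ P₁).ncard := by rw [hsplit]
    _ ≤ P₀.ncard + P₁.ncard := Set.ncard_union_le _ _
    _ ≤ (FacLe w ((n + 1) / 2)).ncard + (FacLe w ((n + 1) / 2)).ncard := by
        have h0 := hc P₀ 0 (fun s hs => hs.1) (fun s hs => hs.2)
        have h1 := hc P₁ 1 (fun s hs => hs.1) (fun s hs => hs.2)
        omega
    _ = 2 * (FacLe w ((n + 1) / 2)).ncard := by ring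

/-! ### The recursion and its solution -/

theorem recursion {w : List A} (hw : IsRichWord w) (n : ℕ) :
    (FacLe w n).ncard ≤ 4 * n * (FacLe w ((n + 1) / 2)).ncard := by
  calc (FacLe w n).ncard ≤ 2 * (n * (PalLe w n).ncard) := step1 hw n
    _ ≤ 2 * (n * (2 * (FacLe w ((n + 1) / 2)).ncard)) :=
        Nat.mul_le_mul_left 2 (Nat.mul_le_mul_left n (step2 w n))
    _ = 4 * n * (FacLe w ((n + 1) / 2)).ncard := by ring

theorem base_case [Fintype A] (w : List A) : (FacLe w 1).ncard ≤ Fintype.card A := by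
  classical
  have hsub : FacLe w 1 ⊆ (fun a : A => [a]) '' Set.univ := by
    rintro u ⟨_, h1, h2⟩
    have h3 : u.length = 1 := by omega
    obtain ⟨a, rfl⟩ := List.length_eq_one_iff.mp h3
    exact ⟨a, trivial, rfl⟩
  calc (FacLe w 1).ncard ≤ ((fun a : A => [a]) '' Set.univ).ncard :=
        Set.ncard_le_ncard hsub (Set.finite_univ.image _)
    _ ≤ (Set.univ : Set A).ncard := Set.ncard_image_le Set.finite_univ
    _ = Fintype.card A := by rw [Set.ncard_univ, Nat.card_eq_fintype_card]

theorem solve [Fintype A] {w : List A} (hw : IsRichWord w) :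
    ∀ k n : ℕ, 1 ≤ n → n ≤ 2 ^ k →
      (FacLe w n).ncard ≤ Fintype.card A * (4 * n) ^ k := by
  intro k
  induction k with
  | zero =>
    intro n h1 h2
    have : n = 1 := by simpa using le_antisymm h2 h1
    subst this
    simpa using base_case w
  | succ k ih =>
    intro n h1 h2
    by_cases hn1 : n = 1
    · subst hn1
      have h3 : 1 ≤ (4 * 1) ^ (k + 1) := Nat.one_le_pow _ _ (by norm_num)
      calc (FacLe w 1).ncard ≤ Fintype.card A := base_case w
        _ ≤ Fintype.card A * (4 * 1) ^ (k + 1) := Nat.le_mul_of_pos_right _ (by omega)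
    · have hn2 : 2 ≤ n := by omega
      have hhalf1 : 1 ≤ (n + 1) / 2 := by omega
      have hhalf2 : (n + 1) / 2 ≤ 2 ^ k := by
        have h4 : n ≤ 2 * 2 ^ k := by
          have : (2:ℕ) ^ (k + 1) = 2 * 2 ^ k := by ring
          omega
        omega
      have hhalfn : (n + 1) / 2 ≤ n := by omega
      calc (FacLe w n).ncard ≤ 4 * n * (FacLe w ((n + 1) / 2)).ncard := recursion hw n
        _ ≤ 4 * n * (Fintype.card A * (4 * ((n + 1) / 2)) ^ k) := by
            have := ih ((n + 1) / 2) hhalf1 hhalf2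
            exact Nat.mul_le_mul_left _ this
        _ ≤ 4 * n * (Fintype.card A * (4 * n) ^ k) := by
            apply Nat.mul_le_mul_left
            apply Nat.mul_le_mul_left
            apply Nat.pow_le_pow_left
            omega
        _ = Fintype.card A * (4 * n) ^ (k + 1) := by ring

theorem main_nat [Fintype A] {w : List A} (hw : IsRichWord w) {n : ℕ} (hn : 1 ≤ n) :
    FinFactorComplexity w n ≤ Fintype.card A * (4 * n) ^ (Nat.clog 2 n) := by
  have hsub : {u : List A | u <:+: w ∧ u.length = n} ⊆ FacLe w n := by
    rintro u ⟨h1, h2⟩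
    exact ⟨h1, by omega, by omega⟩
  calc FinFactorComplexity w n ≤ (FacLe w n).ncard :=
        Set.ncard_le_ncard hsub (facLe_finite w n)
    _ ≤ Fintype.card A * (4 * n) ^ (Nat.clog 2 n) :=
        solve hw (Nat.clog 2 n) n hn (Nat.le_pow_clog one_lt_two n)

/-! ### The analytic estimate -/

theorem analytic (q n : ℕ) (hq : 1 ≤ q) (hn : 1 ≤ n) {δ : ℝ}
    (hδ : δ = 3 / (2 * (Real.log 3 - Real.log 2))) :
    ((q * (4 * n) ^ (Nat.clog 2 n) : ℕ) : ℝ) ≤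
      (4 * (q : ℝ) ^ 2 * n) ^ (δ * Real.log (2 * n) + 2) := by
  have hlog2 : (0:ℝ) < Real.log 2 := Real.log_pos (by norm_num)
  have hD : (0:ℝ) < Real.log 3 - Real.log 2 :=
    sub_pos.2 (Real.log_lt_log (by norm_num) (by norm_num))
  have hq' : (1:ℝ) ≤ (q:ℝ) := by exact_mod_cast hq
  have hn' : (1:ℝ) ≤ (n:ℝ) := by exact_mod_cast hn
  set B : ℝ := 4 * (q:ℝ) ^ 2 * (n:ℝ) with hB
  have hB1 : (1:ℝ) ≤ B := by nlinarith
  have hq2 : (1:ℝ) ≤ (q:ℝ) ^ 2 := by nlinarith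
  have hqB : (q:ℝ) ≤ B := by nlinarith
  have h4nB : 4 * (n:ℝ) ≤ B := by nlinarith
  set c := Nat.clog 2 n with hc
  have hstep1 : ((q * (4 * n) ^ c : ℕ) : ℝ) ≤ B ^ (c + 1) := by
    push_cast
    have h1 : (4 * (n:ℝ)) ^ c ≤ B ^ c :=
      pow_le_pow_left₀ (by positivity) h4nB c
    calc (q:ℝ) * (4 * (n:ℝ)) ^ c ≤ B * B ^ c := by
          apply mul_le_mul hqB h1 (by positivity) (by linarith)
      _ = B ^ (c + 1) := by ring
  have hcbound : (c:ℝ) ≤ Real.log n / Real.log 2 + 1 := by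
    by_cases h1 : n = 1
    · have hc0 : c = 0 := by simp [hc, h1, Nat.clog]
      rw [hc0]
      have h2 : 0 ≤ Real.log n / Real.log 2 :=
        div_nonneg (Real.log_natCast_nonneg n) (le_of_lt hlog2)
      push_cast
      linarith
    · have hn2 : 2 ≤ n := by omega
      have hcpos : 0 < c := Nat.clog_pos one_lt_two hn2
      have hpow : (2:ℕ) ^ (c - 1) < n := by
        have := Nat.pow_pred_clog_lt_self one_lt_two (by omega : 1 < n)
        simpa [hc, Nat.pred_eq_sub_one] using this
      have hpow' : ((2:ℝ)) ^ (c - 1) ≤ (n:ℝ) := by exact_mod_cast le_of_lt hpow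
      have hlog : ((c:ℝ) - 1) * Real.log 2 ≤ Real.log n := by
        have h2 : Real.log ((2:ℝ) ^ (c - 1)) ≤ Real.log n :=
          Real.log_le_log (by positivity) hpow'
        rw [Real.log_pow] at h2
        have hcast : ((c - 1 : ℕ) : ℝ) = (c:ℝ) - 1 := by
          rw [Nat.cast_sub hcpos]
          norm_num
        rw [hcast] at h2
        exact h2
      have h3 : (c:ℝ) - 1 ≤ Real.log n / Real.log 2 := by
        rw [le_div_iff₀ hlog2]
        linarith
      linarith
  have hδ2 : 1 / Real.log 2 ≤ δ := by
    rw [hδ]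
    rw [div_le_div_iff₀ hlog2 (by linarith)]
    have h9 : Real.log 9 = 2 * Real.log 3 := by
      rw [show (9:ℝ) = 3 ^ 2 by norm_num, Real.log_pow]
      push_cast; ring
    have h32 : Real.log 32 = 5 * Real.log 2 := by
      rw [show (32:ℝ) = 2 ^ 5 by norm_num, Real.log_pow]
      push_cast; ring
    have : Real.log 9 ≤ Real.log 32 := Real.log_le_log (by norm_num) (by norm_num)
    nlinarith
  have hδpos : 0 < δ := by rw [hδ]; positivity
  have hlogn : 0 ≤ Real.log n := Real.log_natCast_nonneg n
  have hexp : ((c + 1 : ℕ) : ℝ) ≤ δ * Real.log (2 * n) + 2 := by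
    have hlog2n : Real.log (2 * (n:ℝ)) = Real.log 2 + Real.log n :=
      Real.log_mul (by norm_num) (by positivity)
    rw [hlog2n]
    push_cast
    have h1 : Real.log n / Real.log 2 ≤ δ * Real.log n := by
      rw [div_eq_inv_mul, ← one_div]
      exact mul_le_mul_of_nonneg_right hδ2 hlogn
    have h2 : 0 ≤ δ * Real.log 2 := by positivity
    nlinarith [hcbound]
  calc ((q * (4 * n) ^ c : ℕ) : ℝ) ≤ B ^ (c + 1) := hstep1
    _ = B ^ ((c + 1 : ℕ) : ℝ) := by rw [Real.rpow_natCast]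
    _ ≤ B ^ (δ * Real.log (2 * n) + 2) :=
        Real.rpow_le_rpow_of_exponent_le hB1 hexp
    _ = (4 * (q : ℝ) ^ 2 * n) ^ (δ * Real.log (2 * n) + 2) := by rw [hB]

/-! ### The finite-word bound -/

theorem fin_bound (A : Type*) [Fintype A] (hq : 1 ≤ Fintype.card A)
    {δ : ℝ} (hδ : δ = 3 / (2 * (Real.log 3 - Real.log 2)))
    {n : ℕ} (hn : 1 ≤ n) (w : List A) (hw : IsRichWord w) :
    (FinFactorComplexity w n : ℝ) ≤
      (4 * (Fintype.card A : ℝ) ^ 2 * n) ^ (δ * Real.log (2 * n) + 2) := by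
  have h1 := main_nat hw hn
  have h2 : (FinFactorComplexity w n : ℝ) ≤
      ((Fintype.card A * (4 * n) ^ (Nat.clog 2 n) : ℕ) : ℝ) := by
    exact_mod_cast h1
  calc (FinFactorComplexity w n : ℝ) ≤
      ((Fintype.card A * (4 * n) ^ (Nat.clog 2 n) : ℕ) : ℝ) := h2
    _ ≤ (4 * (Fintype.card A : ℝ) ^ 2 * n) ^ (δ * Real.log (2 * n) + 2) :=
        analytic (Fintype.card A) n hq hn hδ

/-! ### The infinite-word case -/

/-- the window of `x` at position `i` of length `m` -/
def window (x : ℕ → A) (i m : ℕ) : List A := (List.range m).map fun j => x (i + j)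

lemma window_length (x : ℕ → A) (i m : ℕ) : (window x i m).length = m := by
  simp [window]

lemma window_add (x : ℕ → A) (i a b : ℕ) :
    window x i (a + b) = window x i a ++ window x (i + a) b := by
  rw [window, List.range_add, List.map_append, List.map_map]
  congr 1
  rw [window]
  congr 1
  funext j
  simp only [Function.comp]
  rw [Nat.add_assoc]

lemma isInfFactor_window (x : ℕ → A) (i m : ℕ) : IsInfFactor x (window x i m) := by
  refine ⟨i, ?_⟩
  rw [window_length]
  rfl

theorem inf_bound (A : Type*) [Fintype A] (hq : 1 ≤ Fintype.card A)
    {δ : ℝ} (hδ : δ = 3 / (2 * (Real.log 3 - Real.log 2)))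
    {n : ℕ} (hn : 1 ≤ n) (x : ℕ → A) (hx : IsRichInfWord x) :
    (InfFactorComplexity x n : ℝ) ≤
      (4 * (Fintype.card A : ℝ) ^ 2 * n) ^ (δ * Real.log (2 * n) + 2) := by
  classical
  set S : Set (List A) := {u | IsInfFactor x u ∧ u.length = n} with hS
  have hwitness : ∀ u ∈ S, ∃ i, u = window x i n := by
    rintro u ⟨⟨i, hi⟩, hlen⟩
    refine ⟨i, ?_⟩
    rw [window, ← hlen]
    exact hi
  have hSfin : S.Finite := by
    apply Set.Finite.subset (List.finite_length_eq A n)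
    rintro u ⟨_, hlen⟩
    exact hlen
  -- choose witnesses and take their maximum
  set g : List A → ℕ := fun u =>
    if h : ∃ i, u = window x i n then Classical.choose h else 0 with hg
  have hgspec : ∀ u ∈ S, u = window x (g u) n := by
    intro u hu
    have h := hwitness u hu
    rw [hg]
    simp only [dif_pos h]
    exact Classical.choose_spec h
  set I : ℕ := hSfin.toFinset.sup g with hI
  have hgle : ∀ u ∈ S, g u ≤ I := by
    intro u hu
    exact Finset.le_sup (hSfin.mem_toFinset.2 hu)
  set W : List A := window x 0 (I + n) with hW
  have hWrich : IsRichWord W := hx W (isInfFactor_window x 0 (I + n))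
  have hsub : S ⊆ {u : List A | u <:+: W ∧ u.length = n} := by
    intro u hu
    refine ⟨?_, hu.2⟩
    have hiu := hgspec u hu
    have hle := hgle u hu
    have hdecomp : I + n = g u + n + (I - g u) := by omega
    have h1 : W = window x 0 (g u + n) ++ window x (0 + (g u + n)) (I - g u) := by
      rw [hW, hdecomp]
      exact window_add x 0 (g u + n) (I - g u)
    have h2 : window x 0 (g u + n) = window x 0 (g u) ++ window x (0 + g u) n :=
      window_add x 0 (g u) n
    rw [h1, h2]
    simp only [Nat.zero_add]
    refine ⟨window x 0 (g u), window x (g u + n) (I - g u), ?_⟩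
    rw [← hiu]
  have hcard : InfFactorComplexity x n ≤ FinFactorComplexity W n := by
    apply Set.ncard_le_ncard hsub (fac_finite W n)
  have hfin := fin_bound A hq hδ hn W hWrich
  calc (InfFactorComplexity x n : ℝ) ≤ (FinFactorComplexity W n : ℝ) := by
        exact_mod_cast hcard
    _ ≤ (4 * (Fintype.card A : ℝ) ^ 2 * n) ^ (δ * Real.log (2 * n) + 2) := hfin

end RichAux

/-- Let `δ = 3/(2(ln 3 − ln 2))` and `q ≥ 1` the alphabet size.  Every finite or
infinite rich word `w` over this alphabet satisfies
`F_w(n) ≤ (4q²n)^{δ ln(2n) + 2}` for every positive integer `n`. -/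
theorem statement2 (A : Type*) [Fintype A] (hq : 1 ≤ Fintype.card A)
    (δ : ℝ) (hδ : δ = 3 / (2 * (Real.log 3 - Real.log 2)))
    (n : ℕ) (hn : 1 ≤ n) :
    (∀ w : List A, IsRichWord w →
      (FinFactorComplexity w n : ℝ) ≤
        (4 * (Fintype.card A : ℝ) ^ 2 * n) ^ (δ * Real.log (2 * n) + 2)) ∧
    (∀ x : ℕ → A, IsRichInfWord x →
      (InfFactorComplexity x n : ℝ) ≤
        (4 * (Fintype.card A : ℝ) ^ 2 * n) ^ (δ * Real.log (2 * n) + 2)) := by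
  constructor
  · intro w hw
    exact RichAux.fin_bound A hq hδ hn w hw
  · intro x hx
    exact RichAux.inf_bound A hq hδ hn x hx
end

section
/- If w is a finite or infinite rich word over an alphabet of size q and n is a positive integer, then the factor complexity of w satisfies F_w(n) ≤ c₁ · n^{c₂ ln n}. -/
namespace Rich3
open List
open scoped Classical
variable {A : Type*}

lemma finite_infixes (w : List A) : {u : List A | u <:+: w}.Finite := by
  apply Set.Finite.subset (Set.Finite.image2 (fun a b => (w.drop a).take b)
    (Set.finite_Iic w.length) (Set.finite_Iic w.length))
  rintro u ⟨s, t, hst⟩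
  refine ⟨s.length, ?_, u.length, ?_, ?_⟩
  · simp only [Set.mem_Iic]
    rw [← hst]; simp
  · simp only [Set.mem_Iic]
    rw [← hst]; simp; omega
  · simp only [← hst, append_assoc, drop_left]
    rw [take_append_of_le_length (le_refl _), take_length]

lemma finite_subinfix {s : Set (List A)} (w : List A) (h : ∀ u ∈ s, u <:+: w) : s.Finite :=
  Set.Finite.subset (finite_infixes w) h

lemma infix_dropLast {u s t l : List A} (h : l = s ++ u ++ t) (ht : t ≠ []) :
    u <:+: l.dropLast := by
  rcases eq_nil_or_concat t with rfl | ⟨t', b, rfl⟩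
  · exact absurd rfl ht
  · refine ⟨s, t', ?_⟩
    rw [h]
    simp only [concat_eq_append, ← append_assoc]
    rw [dropLast_concat]

lemma suffix_of_infix_not_dropLast {u w : List A} (h : u <:+: w)
    (h2 : ¬ u <:+: w.dropLast) : u <:+ w := by
  obtain ⟨s, t, hst⟩ := h
  rcases eq_nil_or_concat t with rfl | ⟨t', b, rfl⟩
  · exact ⟨s, by simpa using hst⟩
  · exact absurd (infix_dropLast hst.symm (by simp)) h2

lemma suffix_of_suffix_length_le {u v t : List A} (h1 : u <:+ t) (h2 : v <:+ t)
    (h : u.length ≤ v.length) : u <:+ v := by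
  rw [← reverse_prefix] at h1 h2 ⊢
  exact prefix_of_prefix_length_le h1 h2 (by simpa using h)

lemma suffix_eq_of_length {u v t : List A} (h1 : u <:+ t) (h2 : v <:+ t)
    (h : u.length = v.length) : u = v :=
  (suffix_of_suffix_length_le h1 h2 h.le).sublist.eq_of_length h

lemma rev_prefix_of_suffix_pal {u p : List A} (hp : p.reverse = p) (h : u <:+ p) :
    u.reverse <+: p := by
  conv_rhs => rw [← hp]
  rw [reverse_prefix]; exact h

lemma dropLast_take {w : List A} {j : ℕ} (h : j ≤ w.length) :
    (w.take j).dropLast = w.take (j - 1) := by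
  rw [dropLast_eq_take, take_take, length_take]
  congr 1
  omega

lemma take_eq_take_concat {w : List A} {j : ℕ} (h1 : 1 ≤ j) (h2 : j ≤ w.length) :
    ∃ c : A, w.take j = w.take (j-1) ++ [c] := by
  obtain ⟨j', rfl⟩ : ∃ j', j = j' + 1 := ⟨j - 1, by omega⟩
  refine ⟨w[j']'(by omega), ?_⟩
  rw [take_succ]
  simp only [Nat.add_sub_cancel]
  congr 1
  rw [getElem?_eq_getElem (by omega)]
  rfl

lemma take_infix_take {w : List A} {j j' : ℕ} (h : j ≤ j') {u : List A}
    (hu : u <:+: w.take j) : u <:+: w.take j' := by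
  apply hu.trans
  apply IsPrefix.isInfix
  have : w.take j = (w.take j').take j := by rw [take_take, min_eq_left h]
  rw [this]; exact take_prefix _ _

/-! ### Palindromic factors -/

def Pals (w : List A) : Set (List A) := {u : List A | u <:+: w ∧ IsPalindrome u}

lemma pals_finite (w : List A) : (Pals w).Finite :=
  finite_subinfix w (fun _ h => h.1)

lemma pals_nil : Pals ([] : List A) = {[]} := by
  ext u
  simp only [Pals, Set.mem_setOf_eq, Set.mem_singleton_iff]
  constructor
  · rintro ⟨h, -⟩
    simpa using List.infix_nil.mp h
  · rintro rfl
    exact ⟨infix_rfl, rfl⟩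

lemma nil_mem_pals' : True := trivial

lemma nil_mem_pals (w : List A) : [] ∈ Pals w := ⟨nil_infix, rfl⟩

lemma pals_mono {w v : List A} (h : w <:+: v) : Pals w ⊆ Pals v :=
  fun _ hu => ⟨hu.1.trans h, hu.2⟩

lemma pal_new_subsingleton (w : List A) (a : A) :
    (Pals (w ++ [a]) \ Pals w).Subsingleton := by
  rintro p ⟨⟨hp1, hp2⟩, hp3⟩ q ⟨⟨hq1, hq2⟩, hq3⟩
  -- both are suffixes of w ++ [a]
  have hps : p <:+ w ++ [a] := by
    apply suffix_of_infix_not_dropLast hp1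
    rw [dropLast_concat]
    intro hc
    exact hp3 ⟨hc, hp2⟩
  have hqs : q <:+ w ++ [a] := by
    apply suffix_of_infix_not_dropLast hq1
    rw [dropLast_concat]
    intro hc
    exact hq3 ⟨hc, hq2⟩
  -- wlog
  have key : ∀ p q : List A, p.reverse = p → q.reverse = q → p <:+ w ++ [a] →
      q <:+ w ++ [a] → p.length < q.length → p <:+: w := by
    intro p q hp2 hq2 hps hqs hlt
    have hpq : p <:+ q := suffix_of_suffix_length_le hps hqs hlt.le
    have hpref : p <+: q := by
      have := rev_prefix_of_suffix_pal hq2 hpq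
      rwa [hp2] at this
    obtain ⟨t, ht⟩ := hpref
    have htne : t ≠ [] := by
      rintro rfl
      rw [append_nil] at ht
      rw [ht] at hlt
      exact lt_irrefl _ hlt
    obtain ⟨s, hs⟩ := hqs
    have : w ++ [a] = s ++ p ++ t := by
      rw [← hs, ← ht, append_assoc]
    have := infix_dropLast this htne
    rwa [dropLast_concat] at this
  rcases lt_trichotomy p.length q.length with h | h | h
  · exact absurd (key p q hp2 hq2 hps hqs h) (fun hc => hp3 ⟨hc, hp2⟩)
  · exact suffix_eq_of_length hps hqs h
  · exact absurd (key q p hq2 hp2 hqs hps h) (fun hc => hq3 ⟨hc, hq2⟩)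

lemma pal_step (w : List A) (a : A) :
    (Pals (w ++ [a])).ncard ≤ (Pals w).ncard + 1 := by
  have hsub : Pals w ⊆ Pals (w ++ [a]) := pals_mono ⟨[], [a], by simp⟩
  have : Pals (w ++ [a]) = Pals w ∪ (Pals (w ++ [a]) \ Pals w) := by
    rw [Set.union_diff_cancel hsub]
  rw [this]
  refine le_trans (Set.ncard_union_le _ _) ?_
  gcongr
  rcases (pal_new_subsingleton w a).eq_empty_or_singleton with h | ⟨x, h⟩
  · simp [h]
  · simp [h]

lemma pal_card_le (w : List A) : (Pals w).ncard ≤ w.length + 1 := by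
  induction w using List.reverseRecOn with
  | nil => simp [pals_nil]
  | append_singleton w a ih =>
      refine le_trans (pal_step w a) ?_
      simp only [length_append, length_cons, length_nil]
      omega

lemma isRichWord_iff (w : List A) : IsRichWord w ↔ (Pals w).ncard = w.length + 1 :=
  Iff.rfl

lemma rich_nil : IsRichWord ([] : List A) := by
  rw [isRichWord_iff, pals_nil]
  simp

lemma rich_concat {w : List A} {a : A} (h : IsRichWord (w ++ [a])) : IsRichWord w := by
  rw [isRichWord_iff] at h ⊢
  have h1 := pal_step w a
  have h2 := pal_card_le w
  rw [h] at h1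
  simp only [length_append, length_cons, length_nil] at h1
  omega

lemma rich_take {w : List A} (h : IsRichWord w) (j : ℕ) : IsRichWord (w.take j) := by
  induction w using List.reverseRecOn generalizing j with
  | nil => simpa using rich_nil
  | append_singleton w a ih =>
      rcases le_or_gt j w.length with hj | hj
      · rw [take_append_of_le_length hj]
        exact ih (rich_concat h) j
      · rw [take_of_length_le (by simp; omega)]
        exact h

/-- In a rich word, a *new* palindromic suffix exists: a palindromic suffix that is
not an infix of `dropLast`. -/
lemma exists_np {w : List A} (h : IsRichWord w) (hw : w ≠ []) :
    ∃ p : List A, p <:+ w ∧ IsPalindrome p ∧ p ≠ [] ∧ ¬ p <:+: w.dropLast := by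
  have hdrop : IsRichWord w.dropLast := by
    have := rich_concat (w := w.dropLast) (a := w.getLast hw)
    rw [dropLast_append_getLast hw] at this
    exact this h
  have hsub : Pals w.dropLast ⊆ Pals w := pals_mono (dropLast_prefix w).isInfix
  have hcard : (Pals w.dropLast).ncard < (Pals w).ncard := by
    rw [(isRichWord_iff _).mp h, (isRichWord_iff _).mp hdrop, length_dropLast]
    have : 1 ≤ w.length := length_pos_iff.mpr hw
    omega
  have hne : Pals w.dropLast ≠ Pals w := fun hc => by rw [hc] at hcard; omega
  obtain ⟨p, hp, hnp⟩ := Set.exists_of_ssubset (ssubset_of_subset_of_ne hsub hne)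
  refine ⟨p, suffix_of_infix_not_dropLast hp.1 (fun hc => hnp ⟨hc, hp.2⟩), hp.2, ?_,
    fun hc => hnp ⟨hc, hp.2⟩⟩
  rintro rfl
  exact hnp (nil_mem_pals _)

/-! ### first-occurrence machinery -/

/-- The first-occurrence index: least `j` such that `u` is an infix of `w.take j`. -/
noncomputable def fpos (w u : List A) : ℕ :=
  if h : u <:+: w then
    Nat.find (⟨w.length, by simpa using h⟩ : ∃ j, u <:+: w.take j) else 0

lemma fpos_infix_take {w u : List A} (hu : u <:+: w) : u <:+: w.take (fpos w u) := by
  rw [fpos, dif_pos hu]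
  exact Nat.find_spec (p := fun j => u <:+: w.take j) ⟨w.length, by simpa using hu⟩

lemma fpos_le {w u : List A} (hu : u <:+: w) {j : ℕ} (h : u <:+: w.take j) :
    fpos w u ≤ j := by
  rw [fpos, dif_pos hu]
  exact Nat.find_le (p := fun j => u <:+: w.take j) h

lemma fpos_min {w u : List A} (hu : u <:+: w) {j : ℕ} (h : j < fpos w u) :
    ¬ u <:+: w.take j := by
  rw [fpos, dif_pos hu] at h
  exact Nat.find_min (p := fun j => u <:+: w.take j) _ h

lemma fpos_le_length {w u : List A} (hu : u <:+: w) : fpos w u ≤ w.length :=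
  fpos_le hu (by simpa using hu)

lemma length_le_fpos {w u : List A} (hu : u <:+: w) : u.length ≤ fpos w u := by
  have h := (fpos_infix_take hu).length_le
  rw [length_take] at h
  omega

lemma fpos_pos {w u : List A} (hu : u <:+: w) (hne : u ≠ []) : 1 ≤ fpos w u := by
  have := length_le_fpos hu
  have : 1 ≤ u.length := length_pos_iff.mpr hne
  omega

lemma fpos_suffix {w u : List A} (hu : u <:+: w) (hne : u ≠ []) :
    u <:+ w.take (fpos w u) := by
  apply suffix_of_infix_not_dropLast (fpos_infix_take hu)
  rw [dropLast_take (fpos_le_length hu)]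
  exact fpos_min hu (by have := fpos_pos hu hne; omega)

lemma fpos_eq {w u : List A} (hu : u <:+: w) {j : ℕ} (h1 : u <:+: w.take j)
    (h2 : ¬ u <:+: w.take (j-1)) (hj : 1 ≤ j) : fpos w u = j := by
  refine le_antisymm (fpos_le hu h1) ?_
  by_contra hc
  push_neg at hc
  exact h2 (take_infix_take (by omega) (fpos_infix_take hu))

/-! ### the new palindromic suffix as a function -/

noncomputable def np (t : List A) : List A :=
  if h : IsRichWord t ∧ t ≠ [] then (exists_np h.1 h.2).choose else []

lemma np_spec {t : List A} (h1 : IsRichWord t) (h2 : t ≠ []) :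
    np t <:+ t ∧ IsPalindrome (np t) ∧ np t ≠ [] ∧ ¬ np t <:+: t.dropLast := by
  rw [np, dif_pos ⟨h1, h2⟩]
  exact (exists_np h1 h2).choose_spec

lemma infix_of_infix_take {w u : List A} {j : ℕ} (h : u <:+: w.take j) : u <:+: w :=
  h.trans (take_prefix _ _).isInfix

/-- `np` of a prefix `w.take j` of a rich word: the four basic properties. -/
lemma np_take_spec {w : List A} (hw : IsRichWord w) {j : ℕ} (hj1 : 1 ≤ j)
    (hjl : j ≤ w.length) :
    np (w.take j) <:+ w.take j ∧ IsPalindrome (np (w.take j)) ∧ np (w.take j) ≠ [] ∧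
      ¬ np (w.take j) <:+: w.take (j - 1) := by
  have hne : w.take j ≠ [] := by
    apply ne_nil_of_length_pos
    rw [length_take]
    omega
  have h := np_spec (rich_take hw j) hne
  rwa [dropLast_take hjl] at h

/-- Structure of elements of the "old tail" class. -/
lemma A2_struct {w : List A} (hw : IsRichWord w) {m : ℕ} (hm : 1 ≤ m) {x : List A}
    (hx : x <:+: w) (hlen : x.length = m + 1)
    (hold : x.drop 1 <:+: w.take (fpos w x - 1)) :
    (np (w.take (fpos w x)) = x ∧ (np (w.take (fpos w x))).length = m + 1) ∨
    ((np (w.take (fpos w x))).length ≠ m + 1 ∧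
      x.reverse <:+: w.take (fpos w x - 1) ∧
      m + 1 ≤ fpos w x.reverse ∧ fpos w x.reverse ≤ fpos w x - 1 ∧
      (np (w.take (fpos w x.reverse))).length ≤ m) := by
  have hxne : x ≠ [] := by
    apply ne_nil_of_length_pos; omega
  set j := fpos w x with hjdef
  have hj1 : 1 ≤ j := fpos_pos hx hxne
  have hjl : j ≤ w.length := fpos_le_length hx
  have hjm : m + 1 ≤ j := by
    have := length_le_fpos hx; omega
  obtain ⟨hps, hppal, hpne, hpnew⟩ := np_take_spec hw hj1 hjl
  set p := np (w.take j) with hpdef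
  have hxs : x <:+ w.take j := fpos_suffix hx hxne
  -- the new palindrome has length at least m+1
  have hplen : m + 1 ≤ p.length := by
    by_contra hc
    push_neg at hc
    have hpx : p <:+ x := suffix_of_suffix_length_le hps hxs (by omega)
    have hpv : p <:+ x.drop 1 := by
      apply suffix_of_suffix_length_le (t := x) hpx (drop_suffix _ _)
      rw [length_drop]
      omega
    exact hpnew (hpv.isInfix.trans hold)
  rcases eq_or_lt_of_le hplen with heq | hlt
  · -- p = x
    left
    refine ⟨suffix_eq_of_length hps hxs (by omega), by omega⟩
  · -- the long case
    right
    have hxp : x <:+ p := suffix_of_suffix_length_le hxs hps (by omega)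
    have hxrp : x.reverse <+: p := rev_prefix_of_suffix_pal hppal hxp
    obtain ⟨tt, htt⟩ := hxrp
    have httne : tt ≠ [] := by
      rintro rfl
      rw [append_nil] at htt
      have := congrArg List.length htt
      simp at this
      omega
    obtain ⟨s, hs⟩ := hps
    have hform : w.take j = s ++ x.reverse ++ tt := by
      rw [← hs, ← htt, append_assoc]
    have hxrinf : x.reverse <:+: w.take (j - 1) := by
      have := infix_dropLast hform httne
      rwa [dropLast_take hjl] at this
    have hxrw : x.reverse <:+: w := infix_of_infix_take hxrinf
    have hxrne : x.reverse ≠ [] := by simpa using hxne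
    have hj0le : fpos w x.reverse ≤ j - 1 := fpos_le hxrw hxrinf
    have hj0ge : m + 1 ≤ fpos w x.reverse := by
      have := length_le_fpos hxrw
      rw [length_reverse] at this
      omega
    set j0 := fpos w x.reverse with hj0def
    have hj0l : j0 ≤ w.length := fpos_le_length hxrw
    obtain ⟨hrs, hrpal, hrne, hrnew⟩ := np_take_spec hw (by omega) hj0l
    set r := np (w.take j0) with hrdef
    refine ⟨by omega, hxrinf, hj0ge, hj0le, ?_⟩
    -- r must be short
    by_contra hc
    push_neg at hc
    have hxrs : x.reverse <:+ w.take j0 := fpos_suffix hxrw hxrne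
    have hxr_r : x.reverse <:+ r := by
      apply suffix_of_suffix_length_le hxrs hrs
      rw [length_reverse]
      omega
    have hxr : x <+: r := by
      have := rev_prefix_of_suffix_pal hrpal hxr_r
      rwa [reverse_reverse] at this
    have hxinf : x <:+: w.take (j - 1) := by
      apply take_infix_take (j := j0) (by omega)
      exact hxr.isInfix.trans hrs.isInfix
    exact fpos_min hx (by omega) hxinf

/-! ### factor sets -/

def Facts (w : List A) (k : ℕ) : Set (List A) := {u : List A | u <:+: w ∧ u.length = k}

def PalsUpto (w : List A) (K : ℕ) : Set (List A) :=
  {p : List A | p <:+: w ∧ IsPalindrome p ∧ p ≠ [] ∧ p.length ≤ K}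

lemma facts_finite (w : List A) (k : ℕ) : (Facts w k).Finite :=
  finite_subinfix w (fun _ h => h.1)

lemma palsUpto_finite (w : List A) (K : ℕ) : (PalsUpto w K).Finite :=
  finite_subinfix w (fun _ h => h.1)

/-- The main counting step. -/
lemma main_step {w : List A} (hw : IsRichWord w) {m : ℕ} (hm : 1 ≤ m) :
    (Facts w (m+1)).ncard ≤ (Facts w m).ncard + (PalsUpto w (m+1)).ncard := by
  classical
  set C : List A → Prop := fun x => x.drop 1 <:+: w.take (fpos w x - 1) with hC
  have hsplit : Facts w (m+1) = {x ∈ Facts w (m+1) | ¬ C x} ∪ {x ∈ Facts w (m+1) | C x} := by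
    ext x
    by_cases h : C x <;> simp [h]
  have h1 : {x ∈ Facts w (m+1) | ¬ C x}.ncard ≤ (Facts w m).ncard := by
    refine Set.ncard_le_ncard_of_injOn (fun x => x.drop 1) ?_ ?_ (facts_finite w m)
    · rintro x ⟨⟨hx, hlen⟩, -⟩
      exact ⟨(drop_suffix 1 x).isInfix.trans hx, by rw [length_drop]; omega⟩
    · rintro x ⟨⟨hx, hlen⟩, hnc⟩ x' ⟨⟨hx', hlen'⟩, hnc'⟩ heq
      dsimp only at heq
      have hxne : x ≠ [] := by apply ne_nil_of_length_pos; omega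
      have hxne' : x' ≠ [] := by apply ne_nil_of_length_pos; omega
      have hfx : fpos w (x.drop 1) = fpos w x := by
        apply fpos_eq ((drop_suffix 1 x).isInfix.trans hx)
        · exact ((drop_suffix 1 x).trans (fpos_suffix hx hxne)).isInfix
        · exact hnc
        · exact fpos_pos hx hxne
      have hfx' : fpos w (x'.drop 1) = fpos w x' := by
        apply fpos_eq ((drop_suffix 1 x').isInfix.trans hx')
        · exact ((drop_suffix 1 x').trans (fpos_suffix hx' hxne')).isInfix
        · exact hnc'
        · exact fpos_pos hx' hxne'
      have hjj : fpos w x = fpos w x' := by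
        rw [← hfx, ← hfx', heq]
      exact suffix_eq_of_length (fpos_suffix hx hxne)
        (hjj ▸ fpos_suffix hx' hxne') (by omega)
  have h2 : {x ∈ Facts w (m+1) | C x}.ncard ≤ (PalsUpto w (m+1)).ncard := by
    refine Set.ncard_le_ncard_of_injOn
      (fun x => if (np (w.take (fpos w x))).length = m + 1 then np (w.take (fpos w x))
                else np (w.take (fpos w x.reverse))) ?_ ?_ (palsUpto_finite w (m+1))
    · rintro x ⟨⟨hx, hlen⟩, hc⟩
      rcases A2_struct hw hm hx hlen hc with ⟨heq, hl⟩ | ⟨hne, hinf, hge, hle, hlens⟩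
      · rw [if_pos hl]
        have hxne : x ≠ [] := by apply ne_nil_of_length_pos; omega
        obtain ⟨hps, hppal, hpne, -⟩ := np_take_spec hw (fpos_pos hx hxne) (fpos_le_length hx)
        exact ⟨infix_of_infix_take hps.isInfix, hppal, hpne, by omega⟩
      · rw [if_neg hne]
        have hxrw : x.reverse <:+: w := infix_of_infix_take hinf
        obtain ⟨hrs, hrpal, hrne, -⟩ := np_take_spec hw (j := fpos w x.reverse)
          (by omega) (fpos_le_length hxrw)
        exact ⟨infix_of_infix_take hrs.isInfix, hrpal, hrne, by omega⟩
    · rintro x ⟨⟨hx, hlen⟩, hc⟩ x' ⟨⟨hx', hlen'⟩, hc'⟩ heq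
      dsimp only at heq
      have hxne : x ≠ [] := by apply ne_nil_of_length_pos; omega
      have hxne' : x' ≠ [] := by apply ne_nil_of_length_pos; omega
      rcases A2_struct hw hm hx hlen hc with ⟨heq1, hl1⟩ | ⟨hne1, hinf1, hge1, hle1, hlens1⟩ <;>
        rcases A2_struct hw hm hx' hlen' hc' with ⟨heq1', hl1'⟩ | ⟨hne1', hinf1', hge1', hle1', hlens1'⟩
      · rw [if_pos hl1, if_pos hl1'] at heq
        rw [← heq1, ← heq1', heq]
      · rw [if_pos hl1, if_neg hne1'] at heq
        rw [heq] at hl1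
        omega
      · rw [if_neg hne1, if_pos hl1'] at heq
        rw [← heq] at hl1'
        omega
      · rw [if_neg hne1, if_neg hne1'] at heq
        have hxrw : x.reverse <:+: w := infix_of_infix_take hinf1
        have hxrw' : x'.reverse <:+: w := infix_of_infix_take hinf1'
        set j0 := fpos w x.reverse with hj0
        set j0' := fpos w x'.reverse with hj0'
        have hxrne : x.reverse ≠ [] := by simpa using hxne
        have hxrne' : x'.reverse ≠ [] := by simpa using hxne'
        rcases lt_trichotomy j0 j0' with hlt | heqj | hlt
        · exfalso
          obtain ⟨hrs, -, -, -⟩ := np_take_spec hw (j := j0) (by omega) (fpos_le_length hxrw)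
          obtain ⟨-, -, -, hrnew'⟩ := np_take_spec hw (j := j0') (by omega) (fpos_le_length hxrw')
          apply hrnew'
          rw [← heq]
          exact take_infix_take (by omega) hrs.isInfix
        · have : x.reverse = x'.reverse := by
            apply suffix_eq_of_length (fpos_suffix hxrw hxrne)
            · show x'.reverse <:+ take j0 w
              rw [heqj]
              exact fpos_suffix hxrw' hxrne'
            · simp; omega
          simpa using congrArg List.reverse this
        · exfalso
          obtain ⟨hrs, -, -, -⟩ := np_take_spec hw (j := j0') (by omega) (fpos_le_length hxrw')
          obtain ⟨-, -, -, hrnew⟩ := np_take_spec hw (j := j0) (by omega) (fpos_le_length hxrw)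
          apply hrnew
          rw [heq]
          exact take_infix_take (by omega) hrs.isInfix
  have h3 := Set.ncard_union_le {x ∈ Facts w (m+1) | ¬ C x} {x ∈ Facts w (m+1) | C x}
  rw [← hsplit] at h3
  omega

/-- Extending factors on the right: `F(k) ≤ F(k+1) + 1`. -/
lemma F_step (w : List A) {k : ℕ} (hk : 1 ≤ k) :
    (Facts w k).ncard ≤ (Facts w (k+1)).ncard + 1 := by
  classical
  have hsplit : Facts w k =
      {u ∈ Facts w k | fpos w u < w.length} ∪ {u ∈ Facts w k | ¬ fpos w u < w.length} := by
    ext u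
    constructor
    · intro hu
      by_cases h : fpos w u < w.length
      exacts [Or.inl ⟨hu, h⟩, Or.inr ⟨hu, h⟩]
    · rintro (⟨h, -⟩ | ⟨h, -⟩) <;> exact h
  have h1 : {u ∈ Facts w k | fpos w u < w.length}.ncard ≤ (Facts w (k+1)).ncard := by
    refine Set.ncard_le_ncard_of_injOn (fun u => u ++ (w.drop (fpos w u)).take 1)
      ?_ ?_ (facts_finite w (k+1))
    · rintro u ⟨⟨hu, hlen⟩, hlt⟩
      have hune : u ≠ [] := by apply ne_nil_of_length_pos; omega
      obtain ⟨s, hs⟩ := fpos_suffix hu hune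
      constructor
      · refine ⟨s, (w.drop (fpos w u)).drop 1, ?_⟩
        have e1 : (w.drop (fpos w u)).take 1 ++ (w.drop (fpos w u)).drop 1
            = w.drop (fpos w u) := take_append_drop _ _
        calc s ++ (u ++ (w.drop (fpos w u)).take 1) ++ (w.drop (fpos w u)).drop 1
            = (s ++ u) ++ ((w.drop (fpos w u)).take 1 ++ (w.drop (fpos w u)).drop 1) := by
              simp [append_assoc]
          _ = w.take (fpos w u) ++ w.drop (fpos w u) := by rw [hs, e1]
          _ = w := take_append_drop _ _
      · rw [length_append, hlen, length_take, length_drop]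
        have := fpos_le_length hu
        omega
    · rintro u ⟨⟨hu, hlen⟩, -⟩ u' ⟨⟨hu', hlen'⟩, -⟩ heq
      dsimp only at heq
      have h1 : (u ++ (w.drop (fpos w u)).take 1).take k = u := by
        rw [take_append_of_le_length (by omega), ← hlen, take_length]
      have h2 : (u' ++ (w.drop (fpos w u')).take 1).take k = u' := by
        rw [take_append_of_le_length (by omega), ← hlen', take_length]
      rw [← h1, ← h2, heq]
  have h2 : {u ∈ Facts w k | ¬ fpos w u < w.length}.ncard ≤ 1 := by
    have hss : {u ∈ Facts w k | ¬ fpos w u < w.length}.Subsingleton := by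
      rintro u ⟨⟨hu, hlen⟩, hge⟩ u' ⟨⟨hu', hlen'⟩, hge'⟩
      have hune : u ≠ [] := by apply ne_nil_of_length_pos; omega
      have hune' : u' ≠ [] := by apply ne_nil_of_length_pos; omega
      have e1 : fpos w u = w.length := le_antisymm (fpos_le_length hu) (by omega)
      have e1' : fpos w u' = w.length := le_antisymm (fpos_le_length hu') (by omega)
      have s1 : u <:+ w := by
        have := fpos_suffix hu hune
        rwa [e1, take_length] at this
      have s1' : u' <:+ w := by
        have := fpos_suffix hu' hune'
        rwa [e1', take_length] at this
      exact suffix_eq_of_length s1 s1' (by omega)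
    rcases hss.eq_empty_or_singleton with h | ⟨a, h⟩ <;> rw [h] <;> simp
  have h3 := Set.ncard_union_le {u ∈ Facts w k | fpos w u < w.length}
    {u ∈ Facts w k | ¬ fpos w u < w.length}
  rw [← hsplit] at h3
  omega

lemma F_chain (w : List A) {k K : ℕ} (hk : 1 ≤ k) (hK : k ≤ K) :
    (Facts w k).ncard ≤ (Facts w K).ncard + (K - k) := by
  induction K with
  | zero => omega
  | succ K ih =>
      rcases Nat.lt_or_ge k (K+1) with h | h
      · have h1 := ih (by omega)
        have h2 := F_step w (k := K) (by omega)
        omega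
      · have : k = K + 1 := by omega
        subst this
        simp

/-- a palindrome is determined by its half. -/
lemma pal_eq_of_take {p : List A} (hpal : IsPalindrome p) {k H : ℕ} (hk : p.length = k)
    (h1 : H ≤ k) (h2 : k ≤ 2*H) :
    p = p.take H ++ ((p.take H).take (k-H)).reverse := by
  have hdrop : p.drop H = (p.take (k-H)).reverse := by
    have e : p.length - (k - H) = H := by omega
    rw [reverse_take, hpal, e]
  have e2 : (k-H) ⊓ H = k - H := min_eq_left (by omega)
  conv_lhs => rw [← take_append_drop H p]
  rw [hdrop, take_take, e2]

def PalsLen (w : List A) (k : ℕ) : Set (List A) :=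
  {p : List A | p <:+: w ∧ IsPalindrome p ∧ p.length = k}

lemma palsLen_finite (w : List A) (k : ℕ) : (PalsLen w k).Finite :=
  finite_subinfix w (fun _ h => h.1)

lemma palsLen_le_big (w : List A) {k H : ℕ} (h1 : H ≤ k) (h2 : k ≤ 2*H) :
    (PalsLen w k).ncard ≤ (Facts w H).ncard := by
  refine Set.ncard_le_ncard_of_injOn (fun p => p.take H) ?_ ?_ (facts_finite w H)
  · rintro p ⟨hp, hpal, hlen⟩
    refine ⟨(take_prefix H p).isInfix.trans hp, ?_⟩
    rw [length_take]
    omega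
  · rintro p ⟨hp, hpal, hlen⟩ p' ⟨hp', hpal', hlen'⟩ heq
    dsimp only at heq
    rw [pal_eq_of_take hpal hlen h1 h2, pal_eq_of_take hpal' hlen' h1 h2, heq]

lemma palsLen_le_small (w : List A) (k : ℕ) :
    (PalsLen w k).ncard ≤ (Facts w k).ncard := by
  refine Set.ncard_le_ncard ?_ (facts_finite w k)
  rintro p ⟨hp, -, hlen⟩
  exact ⟨hp, hlen⟩

lemma palsUpto_split (w : List A) (K : ℕ) :
    PalsUpto w (K+1) = PalsUpto w K ∪ PalsLen w (K+1) := by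
  ext p
  simp only [PalsUpto, PalsLen, Set.mem_setOf_eq, Set.mem_union]
  constructor
  · rintro ⟨h1, h2, h3, h4⟩
    rcases Nat.lt_or_ge p.length (K+1) with h | h
    · exact Or.inl ⟨h1, h2, h3, by omega⟩
    · exact Or.inr ⟨h1, h2, by omega⟩
  · rintro (⟨h1, h2, h3, h4⟩ | ⟨h1, h2, h3⟩)
    · exact ⟨h1, h2, h3, by omega⟩
    · refine ⟨h1, h2, ?_, by omega⟩
      apply ne_nil_of_length_pos
      omega

lemma palsUpto_zero (w : List A) : PalsUpto w 0 = ∅ := by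
  ext p
  simp only [PalsUpto, Set.mem_setOf_eq, Set.mem_empty_iff_false, iff_false]
  rintro ⟨-, -, h3, h4⟩
  exact h3 (by simpa using (Nat.le_zero.mp h4))

lemma palsUpto_bound (w : List A) {K H : ℕ} (hH : 1 ≤ H) (hK : K ≤ 2*H) :
    (PalsUpto w K).ncard ≤ K * ((Facts w H).ncard + H) := by
  induction K with
  | zero => simp [palsUpto_zero]
  | succ K ih =>
      have hb : (PalsLen w (K+1)).ncard ≤ (Facts w H).ncard + H := by
        rcases Nat.lt_or_ge K H with h | h
        · -- K+1 ≤ H : small case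
          calc (PalsLen w (K+1)).ncard ≤ (Facts w (K+1)).ncard := palsLen_le_small w (K+1)
            _ ≤ (Facts w H).ncard + (H - (K+1)) := F_chain w (by omega) (by omega)
            _ ≤ (Facts w H).ncard + H := by omega
        · calc (PalsLen w (K+1)).ncard ≤ (Facts w H).ncard :=
                palsLen_le_big w (by omega) (by omega)
            _ ≤ (Facts w H).ncard + H := by omega
      have h1 := ih (by omega)
      have h2 := Set.ncard_union_le (PalsUpto w K) (PalsLen w (K+1))
      rw [← palsUpto_split] at h2
      calc (PalsUpto w (K+1)).ncard ≤ (PalsUpto w K).ncard + (PalsLen w (K+1)).ncard := h2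
        _ ≤ K * ((Facts w H).ncard + H) + ((Facts w H).ncard + H) := by omega
        _ = (K+1) * ((Facts w H).ncard + H) := by ring

/-- The master recursion: for a rich word,
`F(n) ≤ F(1) + (n-1) * n * (F(H) + H)` where `H = ⌈n/2⌉`. -/
lemma master {w : List A} (hw : IsRichWord w) {n : ℕ} (hn : 2 ≤ n) :
    (Facts w n).ncard ≤ (Facts w 1).ncard
      + (n - 1) * (n * ((Facts w ((n+1)/2)).ncard + (n+1)/2)) := by
  set H := (n+1)/2 with hH
  have hH1 : 1 ≤ H := by omega
  have hH2 : n ≤ 2 * H := by omega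
  -- induction  on m : F(m) ≤ F(1) + (m-1) * (n * (F H + H)) for 1 ≤ m ≤ n
  have key : ∀ m : ℕ, 1 ≤ m → m ≤ n →
      (Facts w m).ncard ≤ (Facts w 1).ncard + (m - 1) * (n * ((Facts w H).ncard + H)) := by
    intro m
    induction m with
    | zero => omega
    | succ m ih =>
        intro h1 h2
        rcases Nat.lt_or_ge 0 m with hm | hm
        · have hstep := main_step hw (m := m) (by omega)
          have hpal : (PalsUpto w (m+1)).ncard ≤ (m+1) * ((Facts w H).ncard + H) :=
            palsUpto_bound w hH1 (by omega)
          have hih := ih (by omega) (by omega)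
          have hmn : (m+1) * ((Facts w H).ncard + H) ≤ n * ((Facts w H).ncard + H) :=
            Nat.mul_le_mul_right _ (by omega)
          calc (Facts w (m+1)).ncard
              ≤ (Facts w m).ncard + (PalsUpto w (m+1)).ncard := hstep
            _ ≤ ((Facts w 1).ncard + (m - 1) * (n * ((Facts w H).ncard + H)))
                + n * ((Facts w H).ncard + H) := by omega
            _ ≤ (Facts w 1).ncard + (m + 1 - 1) * (n * ((Facts w H).ncard + H)) := by
                have : (m - 1) + 1 ≤ m + 1 - 1 := by omega
                calc (Facts w 1).ncard + (m - 1) * (n * ((Facts w H).ncard + H))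
                    + n * ((Facts w H).ncard + H)
                    = (Facts w 1).ncard + ((m-1) + 1) * (n * ((Facts w H).ncard + H)) := by ring
                  _ ≤ _ := by
                      have := Nat.mul_le_mul_right (n * ((Facts w H).ncard + H)) this
                      omega
        · -- m = 0, m+1 = 1
          have : m = 0 := by omega
          subst this
          simp
  exact key n (by omega) le_rfl

lemma F1_le (w : List A) [Fintype A] : (Facts w 1).ncard ≤ Fintype.card A := by
  have hsub : Facts w 1 ⊆ (fun a : A => [a]) '' Set.univ := by
    rintro u ⟨hu, hlen⟩
    rcases u with - | ⟨a, u⟩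
    · simp at hlen
    · have : u = [] := by simpa using hlen
      subst this
      exact ⟨a, trivial, rfl⟩
  calc (Facts w 1).ncard ≤ ((fun a : A => [a]) '' Set.univ).ncard :=
        Set.ncard_le_ncard hsub (Set.toFinite _)
    _ ≤ (Set.univ : Set A).ncard := Set.ncard_image_le (Set.toFinite _)
    _ = Fintype.card A := by rw [Set.ncard_univ, Nat.card_eq_fintype_card]

/-! ### numerics -/

lemma log_bounds :
    0.6931471803 < Real.log 2 ∧ Real.log 2 < 0.6931471808 ∧
    Real.log 2 + 1/3 ≤ Real.log 3 ∧ Real.log 3 ≤ 2 * Real.log 2 ∧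
    Real.log 3 - Real.log 2 ≤ 1/2 := by
  have h1 := Real.log_two_gt_d9
  have h2 := Real.log_two_lt_d9
  have h3 : Real.log (2/3 : ℝ) ≤ 2/3 - 1 := Real.log_le_sub_one_of_pos (by norm_num)
  have h4 : Real.log (3/2 : ℝ) ≤ 3/2 - 1 := Real.log_le_sub_one_of_pos (by norm_num)
  have e1 : Real.log (2/3 : ℝ) = Real.log 2 - Real.log 3 :=
    Real.log_div (by norm_num) (by norm_num)
  have e2 : Real.log (3/2 : ℝ) = Real.log 3 - Real.log 2 :=
    Real.log_div (by norm_num) (by norm_num)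
  have h5 : Real.log 3 ≤ Real.log 4 := Real.log_le_log (by norm_num) (by norm_num)
  have e3 : Real.log 4 = 2 * Real.log 2 := by
    rw [show (4:ℝ) = 2^2 by norm_num, Real.log_pow]
    push_cast
    ring
  refine ⟨h1, h2, by linarith, by linarith, by linarith⟩

set_option maxHeartbeats 1600000 in
/-- The key numeric inequality for the induction step. -/
lemma numeric_step (q : ℕ) (hq : 1 ≤ q) {c₁ c₂ : ℝ} (hc₁ : 1 ≤ c₁)
    (hc₂ : 9 * Real.log 2 + 5 + 6 * Real.log q ≤ c₂) {n H : ℕ} (hn : 2 ≤ n)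
    (hH1 : 1 ≤ H) (hH2 : n ≤ 2 * H) (hH3 : 4 * H ≤ 3 * n) :
    ((q : ℝ) + 2 * (n:ℝ)^3) * (c₁ * (H:ℝ) ^ (c₂ * Real.log H))
      ≤ c₁ * (n:ℝ) ^ (c₂ * Real.log n) := by
  obtain ⟨hl2a, hl2b, hl3a, hl3b, -⟩ := log_bounds
  have hQ : 0 ≤ Real.log q := Real.log_nonneg (by exact_mod_cast hq)
  have hqR : (1:ℝ) ≤ (q:ℝ) := by exact_mod_cast hq
  have hnR : (2:ℝ) ≤ (n:ℝ) := by exact_mod_cast hn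
  have hHR : (1:ℝ) ≤ (H:ℝ) := by exact_mod_cast hH1
  have hnpos : (0:ℝ) < n := by linarith
  have hHpos : (0:ℝ) < H := by linarith
  have hLn : Real.log 2 ≤ Real.log n := Real.log_le_log (by norm_num) hnR
  have hLn0 : 0 ≤ Real.log n := by linarith
  have hLH0 : 0 ≤ Real.log H := Real.log_nonneg hHR
  have hc₂pos : 0 < c₂ := by nlinarith
  have hcb3 : (0:ℝ) ≤ (n:ℝ)^3 := by positivity
  have hn1 : (1:ℝ) ≤ (n:ℝ)^3 := by
    calc (1:ℝ) = 1^3 := by norm_num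
      _ ≤ (n:ℝ)^3 := pow_le_pow_left₀ (by norm_num) (by linarith) 3
  -- the multiplier bound
  have hM0 : (0:ℝ) < (q:ℝ) + 2 * (n:ℝ)^3 := by linarith
  have hMlog : Real.log ((q:ℝ) + 2 * (n:ℝ)^3)
      ≤ Real.log 3 + Real.log q + 3 * Real.log n := by
    have h1 : (q:ℝ) + 2 * (n:ℝ)^3 ≤ 3 * q * (n:ℝ)^3 := by nlinarith
    have h2 : Real.log ((q:ℝ) + 2 * (n:ℝ)^3) ≤ Real.log (3 * q * (n:ℝ)^3) :=
      Real.log_le_log hM0 h1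
    have h3 : Real.log (3 * (q:ℝ) * (n:ℝ)^3) = Real.log 3 + Real.log q + 3 * Real.log n := by
      rw [Real.log_mul (by positivity) (by positivity),
        Real.log_mul (by norm_num) (by positivity), Real.log_pow]
      push_cast
      ring
    linarith
  -- main inequality on logs
  have hmain : Real.log ((q:ℝ) + 2 * (n:ℝ)^3)
      ≤ c₂ * (Real.log n * Real.log n) - c₂ * (Real.log H * Real.log H) := by
    have hcases : (n = 2 ∧ H = 1) ∨ (n = 3 ∧ H = 2) ∨ 4 ≤ n := by omega
    rcases hcases with ⟨hn2, hH1'⟩ | ⟨hn3, hH2'⟩ | h4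
    · -- n = 2, H = 1
      have e1 : Real.log (H:ℝ) = 0 := by rw [hH1']; simp
      have e2 : Real.log (n:ℝ) = Real.log 2 := by rw [hn2]; norm_num
      rw [e1, e2]
      rw [e2] at hMlog
      have hA0 : (0:ℝ) ≤ 9 * Real.log 2 + 5 + 6 * Real.log q := by linarith
      have hsq : (0.48045:ℝ) ≤ Real.log 2 * Real.log 2 := by
        have h := sq_nonneg (Real.log 2 - 0.6931471803)
        rw [sub_sq] at h
        nlinarith [hl2a]
      have hp : 0 ≤ (c₂ - (9 * Real.log 2 + 5 + 6 * Real.log q)) * (Real.log 2 * Real.log 2) :=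
        mul_nonneg (by linarith) (mul_self_nonneg _)
      have hp2 : (9 * Real.log 2 + 5 + 6 * Real.log q) * (0.48045:ℝ)
          ≤ (9 * Real.log 2 + 5 + 6 * Real.log q) * (Real.log 2 * Real.log 2) :=
        mul_le_mul_of_nonneg_left hsq hA0
      linarith [hMlog, hQ, hl2b, hl3b, hp, hp2]
    · -- n = 3, H = 2
      have e1 : Real.log (H:ℝ) = Real.log 2 := by rw [hH2']; norm_num
      have e2 : Real.log (n:ℝ) = Real.log 3 := by rw [hn3]; norm_num
      rw [e1, e2]
      rw [e2] at hMlog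
      have hA0 : (0:ℝ) ≤ 9 * Real.log 2 + 5 + 6 * Real.log q := by linarith
      have l3lb : (1.0264805:ℝ) ≤ Real.log 3 := by linarith
      have hd : (0.5732:ℝ) ≤ Real.log 3 * Real.log 3 - Real.log 2 * Real.log 2 := by
        have h1 : 0 ≤ (Real.log 3 - 1.0264805) * (Real.log 3 + 1.0264805) :=
          mul_nonneg (by linarith) (by linarith)
        have h2 : 0 < (0.6931471808 - Real.log 2) * (0.6931471808 + Real.log 2) :=
          mul_pos (by linarith) (by linarith)
        nlinarith [h1, h2]
      have hp : 0 ≤ (c₂ - (9 * Real.log 2 + 5 + 6 * Real.log q))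
          * (Real.log 3 * Real.log 3 - Real.log 2 * Real.log 2) :=
        mul_nonneg (by linarith) (by linarith)
      have hp2 : (9 * Real.log 2 + 5 + 6 * Real.log q) * (0.5732:ℝ)
          ≤ (9 * Real.log 2 + 5 + 6 * Real.log q)
            * (Real.log 3 * Real.log 3 - Real.log 2 * Real.log 2) :=
        mul_le_mul_of_nonneg_left hd hA0
      linarith [hMlog, hQ, hl2b, hl3b, hp, hp2]
    · -- general case n ≥ 4
      have hn4 : (4:ℝ) ≤ (n:ℝ) := by exact_mod_cast h4
      have hL4 : 2 * Real.log 2 ≤ Real.log n := by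
        have h5 : Real.log 4 ≤ Real.log n := Real.log_le_log (by norm_num) hn4
        have e3 : Real.log 4 = 2 * Real.log 2 := by
          rw [show (4:ℝ) = 2^2 by norm_num, Real.log_pow]
          push_cast
          ring
        linarith
      have hLnc : (1.3862943606:ℝ) ≤ Real.log n := by linarith
      have hHn : Real.log H ≤ Real.log n - 1/4 := by
        have h34 : (H:ℝ) ≤ 3/4 * (n:ℝ) := by
          have h6 : ((4 * H : ℕ):ℝ) ≤ ((3 * n : ℕ):ℝ) := by exact_mod_cast hH3
          push_cast at h6
          linarith
        have h1 : Real.log H ≤ Real.log (3/4 * (n:ℝ)) := Real.log_le_log hHpos h34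
        have h2 : Real.log (3/4 * (n:ℝ)) = Real.log (3/4 : ℝ) + Real.log n :=
          Real.log_mul (by norm_num) (by positivity)
        have h3 : Real.log (3/4 : ℝ) ≤ -(1/4) := by
          have := Real.log_le_sub_one_of_pos (show (0:ℝ) < 3/4 by norm_num)
          linarith
        linarith
      have e0 : (0:ℝ) ≤ Real.log n / 2 - 1/16 := by linarith
      have hdiff : Real.log n / 2 - 1/16
          ≤ Real.log n * Real.log n - Real.log H * Real.log H := by
        nlinarith [mul_nonneg (by linarith : (0:ℝ) ≤ Real.log n - 1/4 - Real.log H)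
          (by linarith : (0:ℝ) ≤ Real.log n - 1/4 + Real.log H)]
      have p1 : (0.6931471803:ℝ) * Real.log n ≤ Real.log 2 * Real.log n :=
        mul_le_mul_of_nonneg_right (le_of_lt hl2a) hLn0
      have p2 : Real.log q * (1.3862943606:ℝ) ≤ Real.log q * Real.log n :=
        mul_le_mul_of_nonneg_left hLnc hQ
      have p3 : 0 ≤ (c₂ - (9 * Real.log 2 + 5 + 6 * Real.log q)) * (Real.log n / 2 - 1/16) :=
        mul_nonneg (by linarith) e0
      have p4 : 0 ≤ c₂ * ((Real.log n * Real.log n - Real.log H * Real.log H)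
          - (Real.log n / 2 - 1/16)) :=
        mul_nonneg (le_of_lt hc₂pos) (by linarith)
      linarith [hMlog, hQ, hl2b, hl3b, p1, p2, p3, p4, hLnc]
  -- put it together
  have hrpH : (H:ℝ) ^ (c₂ * Real.log H) = Real.exp (Real.log H * (c₂ * Real.log H)) :=
    Real.rpow_def_of_pos hHpos _
  have hrpN : (n:ℝ) ^ (c₂ * Real.log n) = Real.exp (Real.log n * (c₂ * Real.log n)) :=
    Real.rpow_def_of_pos hnpos _
  have hMle : (q:ℝ) + 2 * (n:ℝ)^3
      ≤ Real.exp (Real.log n * (c₂ * Real.log n) - Real.log H * (c₂ * Real.log H)) := by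
    rw [← Real.log_le_iff_le_exp hM0]
    calc Real.log ((q:ℝ) + 2 * (n:ℝ)^3)
        ≤ c₂ * (Real.log n * Real.log n) - c₂ * (Real.log H * Real.log H) := hmain
      _ = Real.log n * (c₂ * Real.log n) - Real.log H * (c₂ * Real.log H) := by ring
  rw [hrpH, hrpN]
  have hE : (0:ℝ) < Real.exp (Real.log H * (c₂ * Real.log H)) := Real.exp_pos _
  have step1 : ((q : ℝ) + 2 * (n:ℝ)^3) * Real.exp (Real.log H * (c₂ * Real.log H))
      ≤ Real.exp (Real.log n * (c₂ * Real.log n)) := by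
    calc ((q : ℝ) + 2 * (n:ℝ)^3) * Real.exp (Real.log H * (c₂ * Real.log H))
        ≤ Real.exp (Real.log n * (c₂ * Real.log n) - Real.log H * (c₂ * Real.log H))
          * Real.exp (Real.log H * (c₂ * Real.log H)) :=
          mul_le_mul_of_nonneg_right hMle (le_of_lt hE)
      _ = Real.exp (Real.log n * (c₂ * Real.log n)) := by
          rw [← Real.exp_add]
          ring_nf
  calc ((q : ℝ) + 2 * (n:ℝ)^3) * (c₁ * Real.exp (Real.log H * (c₂ * Real.log H)))
      = c₁ * (((q : ℝ) + 2 * (n:ℝ)^3) * Real.exp (Real.log H * (c₂ * Real.log H))) := by ring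
    _ ≤ c₁ * Real.exp (Real.log n * (c₂ * Real.log n)) :=
        mul_le_mul_of_nonneg_left step1 (by linarith)

/-- The central theorem, by strong induction. -/
lemma key {A : Type*} [Fintype A] (hqA : 1 ≤ Fintype.card A) {c₁ c₂ : ℝ}
    (hc₁1 : 1 ≤ c₁) (hc₁q : (Fintype.card A : ℝ) ≤ c₁)
    (hc₂ : 9 * Real.log 2 + 5 + 6 * Real.log (Fintype.card A) ≤ c₂) :
    ∀ n : ℕ, 1 ≤ n → ∀ w : List A, IsRichWord w →
      ((Facts w n).ncard : ℝ) ≤ c₁ * (n:ℝ) ^ (c₂ * Real.log n) := by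
  have hQ : 0 ≤ Real.log (Fintype.card A) :=
    Real.log_nonneg (by exact_mod_cast hqA)
  obtain ⟨hl2a, -, -, -, -⟩ := log_bounds
  have hc₂0 : 0 ≤ c₂ := by linarith
  intro n
  induction n using Nat.strong_induction_on with
  | _ n ih =>
    intro hn w hw
    rcases eq_or_lt_of_le hn with h1 | h2
    · -- base case n = 1
      have hn1 : n = 1 := h1.symm
      subst hn1
      have hF1 : ((Facts w 1).ncard : ℝ) ≤ (Fintype.card A : ℝ) := by
        exact_mod_cast F1_le w
      have hrp : ((1:ℕ):ℝ) ^ (c₂ * Real.log ((1:ℕ):ℝ)) = 1 := by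
        norm_num
      rw [hrp]
      linarith
    · -- induction step, n ≥ 2
      have hn2 : 2 ≤ n := h2
      set H := (n+1)/2 with hHdef
      have hH1 : 1 ≤ H := by omega
      have hHn : H < n := by omega
      have hmaster := master hw hn2
      rw [← hHdef] at hmaster
      have hstep : (Facts w n).ncard ≤ (Facts w 1).ncard
          + n * (n * ((Facts w H).ncard + H)) := by
        have h := Nat.mul_le_mul_right (n * ((Facts w H).ncard + H)) (show n - 1 ≤ n by omega)
        omega
      have hF1 : ((Facts w 1).ncard : ℝ) ≤ (Fintype.card A : ℝ) := by
        exact_mod_cast F1_le w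
      have hR : ((Facts w n).ncard : ℝ) ≤ (Fintype.card A : ℝ)
          + (n:ℝ) * ((n:ℝ) * (((Facts w H).ncard : ℝ) + (H:ℝ))) := by
        have h := (Nat.cast_le (α := ℝ)).mpr hstep
        push_cast at h
        linarith
      have hIH : ((Facts w H).ncard : ℝ) ≤ c₁ * (H:ℝ) ^ (c₂ * Real.log H) :=
        ih H hHn (by omega) w hw
      set BH := c₁ * (H:ℝ) ^ (c₂ * Real.log H) with hBH
      have hHR1 : (1:ℝ) ≤ (H:ℝ) := by exact_mod_cast hH1
      have hBH1 : 1 ≤ BH := by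
        have hLH0 : 0 ≤ Real.log H := Real.log_nonneg hHR1
        have h1 : 1 ≤ (H:ℝ) ^ (c₂ * Real.log H) := by
          rw [Real.rpow_def_of_pos (by linarith : (0:ℝ) < (H:ℝ))]
          exact Real.one_le_exp (by positivity)
        calc (1:ℝ) = 1 * 1 := by norm_num
          _ ≤ c₁ * (H:ℝ) ^ (c₂ * Real.log H) :=
              mul_le_mul hc₁1 h1 (by norm_num) (by linarith)
      have hnR : (2:ℝ) ≤ (n:ℝ) := by exact_mod_cast hn2
      have hHleN : (H:ℝ) ≤ (n:ℝ) := by exact_mod_cast hHn.le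
      have hqR1 : (1:ℝ) ≤ (Fintype.card A : ℝ) := by exact_mod_cast hqA
      have hFH0 : (0:ℝ) ≤ ((Facts w H).ncard : ℝ) := by positivity
      -- combine into the multiplier form
      have hcomb : ((Facts w n).ncard : ℝ)
          ≤ ((Fintype.card A : ℝ) + 2 * (n:ℝ)^3) * BH := by
        have t1 : (Fintype.card A : ℝ) * 1 ≤ (Fintype.card A : ℝ) * BH :=
          mul_le_mul_of_nonneg_left hBH1 (by linarith)
        have t2 : (n:ℝ)^2 * ((Facts w H).ncard : ℝ) ≤ (n:ℝ)^2 * BH :=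
          mul_le_mul_of_nonneg_left hIH (by positivity)
        have t3 : (n:ℝ)^2 * (H:ℝ) ≤ (n:ℝ)^2 * (n:ℝ) :=
          mul_le_mul_of_nonneg_left hHleN (by positivity)
        have t4 : (n:ℝ)^3 * 1 ≤ (n:ℝ)^3 * BH :=
          mul_le_mul_of_nonneg_left hBH1 (by positivity)
        have t5 : (n:ℝ)^2 * BH ≤ (n:ℝ)^3 * BH := by
          have hn23 : (n:ℝ)^2 ≤ (n:ℝ)^3 := by
            calc (n:ℝ)^2 = (n:ℝ)^2 * 1 := by ring
              _ ≤ (n:ℝ)^2 * (n:ℝ) := mul_le_mul_of_nonneg_left (by linarith) (by positivity)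
              _ = (n:ℝ)^3 := by ring
          exact mul_le_mul_of_nonneg_right hn23 (by linarith)
        linarith [hR, t1, t2, t3, t4, t5]
      calc ((Facts w n).ncard : ℝ) ≤ ((Fintype.card A : ℝ) + 2 * (n:ℝ)^3) * BH := hcomb
        _ ≤ c₁ * (n:ℝ) ^ (c₂ * Real.log n) := by
            rw [hBH]
            exact numeric_step (Fintype.card A) hqA hc₁1 hc₂ hn2 hH1 (by omega) (by omega)

/-- factors of an infinite word lie in long enough prefixes -/
lemma window_infix {A : Type*} (x : ℕ → A) {i n N : ℕ} (h : i + n ≤ N) :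
    (List.range n).map (fun j => x (i+j)) <:+: (List.range N).map x := by
  refine ⟨(List.range i).map x,
    (List.range (N - (i+n))).map (fun j => x (i+n+j)), ?_⟩
  rw [show N = i + n + (N - (i+n)) by omega, range_add, range_add]
  simp only [map_append, map_map]
  simp [Function.comp_def]

end Rich3

/-- With the constants `δ, c₂, d, α, β, c₁` of the paper, every finite or infinite
rich word `w` over an alphabet of size `q ≥ 1` satisfies
`F_w(n) ≤ c₁ · n^{c₂ ln n}` for every positive integer `n`. -/
theorem statement3 (A : Type*) [Fintype A] (hq : 1 ≤ Fintype.card A)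
    (δ c₂ d α β c₁ : ℝ)
    (hδ : δ = 3 / (2 * (Real.log 3 - Real.log 2)))
    (hc₂ : c₂ = δ * (Real.log 4 + 2 * Real.log (Fintype.card A)) + δ + δ * Real.log 2 + 2)
    (hd0 : 0 < d) (hd1 : d < 1)
    (hα : α = Real.sqrt (1 / c₂))
    (hβ : β = (-1 - d) / (2 * c₂))
    (hc₁ : c₁ = max
      (Real.exp ((δ * Real.log 2 + 2) * (Real.log 4 + 2 * Real.log (Fintype.card A))))
      (Real.exp (-(β + d * β + c₂ * β ^ 2))))
    (n : ℕ) (hn : 1 ≤ n) :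
    (∀ w : List A, IsRichWord w →
      (FinFactorComplexity w n : ℝ) ≤ c₁ * (n : ℝ) ^ (c₂ * Real.log n)) ∧
    (∀ x : ℕ → A, IsRichInfWord x →
      (InfFactorComplexity x n : ℝ) ≤ c₁ * (n : ℝ) ^ (c₂ * Real.log n)) := by
  classical
  obtain ⟨hl2a, hl2b, hl3a, hl3b, h32u⟩ := Rich3.log_bounds
  have h32l : 0 < Real.log 3 - Real.log 2 := by
    have := Real.log_lt_log (show (0:ℝ) < 2 by norm_num) (show (2:ℝ) < 3 by norm_num)
    linarith
  have hQ : 0 ≤ Real.log (Fintype.card A) := Real.log_nonneg (by exact_mod_cast hq)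
  have hδ3 : 3 ≤ δ := by
    rw [hδ]
    rw [le_div_iff₀ (by linarith)]
    linarith
  have hlog4 : Real.log 4 = 2 * Real.log 2 := by
    rw [show (4:ℝ) = 2^2 by norm_num, Real.log_pow]
    push_cast
    ring
  have hc₂' : 9 * Real.log 2 + 5 + 6 * Real.log (Fintype.card A) ≤ c₂ := by
    rw [hc₂, hlog4]
    have e1 : 3 * (2 * Real.log 2 + 2 * Real.log (Fintype.card A))
        ≤ δ * (2 * Real.log 2 + 2 * Real.log (Fintype.card A)) :=
      mul_le_mul_of_nonneg_right hδ3 (by linarith)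
    have e2 : 3 * Real.log 2 ≤ δ * Real.log 2 :=
      mul_le_mul_of_nonneg_right hδ3 (by linarith)
    linarith
  have hE0 : 0 ≤ (δ * Real.log 2 + 2) * (Real.log 4 + 2 * Real.log (Fintype.card A)) := by
    rw [hlog4]
    have : 0 ≤ δ * Real.log 2 := by nlinarith
    nlinarith
  have hc₁1 : 1 ≤ c₁ := by
    rw [hc₁]
    calc (1:ℝ) ≤ Real.exp ((δ * Real.log 2 + 2) *
          (Real.log 4 + 2 * Real.log (Fintype.card A))) := Real.one_le_exp hE0
      _ ≤ _ := le_max_left _ _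
  have hc₁q : (Fintype.card A : ℝ) ≤ c₁ := by
    have hq0 : (0:ℝ) < (Fintype.card A : ℝ) := by
      have : (1:ℝ) ≤ (Fintype.card A : ℝ) := by exact_mod_cast hq
      linarith
    have hle : Real.log (Fintype.card A)
        ≤ (δ * Real.log 2 + 2) * (Real.log 4 + 2 * Real.log (Fintype.card A)) := by
      rw [hlog4]
      have h1 : 0 ≤ δ * Real.log 2 := by nlinarith
      nlinarith
    calc (Fintype.card A : ℝ) = Real.exp (Real.log (Fintype.card A)) :=
          (Real.exp_log hq0).symm
      _ ≤ Real.exp ((δ * Real.log 2 + 2) *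
            (Real.log 4 + 2 * Real.log (Fintype.card A))) := Real.exp_le_exp.mpr hle
      _ ≤ c₁ := by rw [hc₁]; exact le_max_left _ _
  have hkey := Rich3.key hq hc₁1 hc₁q hc₂'
  constructor
  · intro w hw
    exact hkey n hn w hw
  · intro x hx
    set T : Set (List A) := {u : List A | IsInfFactor x u ∧ u.length = n} with hT
    have hTfin : T.Finite := (List.finite_length_eq A n).subset (fun u hu => hu.2)
    set g : List A → ℕ := fun u => if h : IsInfFactor x u then h.choose else 0 with hg
    obtain ⟨M, hM⟩ := (hTfin.image g).bddAbove
    set W : List A := (List.range (M + n)).map x with hW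
    have hWfac : IsInfFactor x W := by
      refine ⟨0, ?_⟩
      simp [hW]
    have hWrich : IsRichWord W := hx W hWfac
    have hsub : T ⊆ Rich3.Facts W n := by
      rintro u ⟨hu1, hu2⟩
      have hspec : u = (List.range u.length).map fun j => x (g u + j) := by
        rw [hg]
        simp only [dif_pos hu1]
        exact hu1.choose_spec
      have hgM : g u ≤ M := hM (Set.mem_image_of_mem g ⟨hu1, hu2⟩)
      refine ⟨?_, hu2⟩
      rw [hspec, hu2, hW]
      exact Rich3.window_infix x (by omega)
    have hcard : (InfFactorComplexity x n : ℝ) ≤ ((Rich3.Facts W n).ncard : ℝ) := by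
      have : T.ncard ≤ (Rich3.Facts W n).ncard :=
        Set.ncard_le_ncard hsub (Rich3.facts_finite W n)
      exact_mod_cast this
    exact le_trans hcard (hkey n hn W hWrich)
end

section
/- Let k be a positive integer such that k − k^d ≥ 1. Then ∑_{i=1}^{k} i·⌊c₁ i^{c₂ ln i}⌋ ≥ (k^d − 1)(k − k^d) · c₁ · (k − k^d)^{c₂ ln(k − k^d)} − k(k+1)/2. -/
lemma gauss_icc (k : ℕ) : ∑ i ∈ Finset.Icc 1 k, (i : ℝ) = k * (k + 1) / 2 := by
  induction k with
  | zero => simp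
  | succ n ih =>
    rw [Finset.sum_Icc_succ_top (Nat.succ_le_succ (Nat.zero_le n)), ih]
    push_cast; ring

/-- With the constants `δ, c₂, d, α, β, c₁` of the paper (for alphabet size `q ≥ 1`),
for every positive integer `k` with `k − k^d ≥ 1` we have
`∑_{i=1}^{k} i·⌊c₁ i^{c₂ ln i}⌋ ≥ (k^d − 1)(k − k^d)·c₁·(k − k^d)^{c₂ ln(k − k^d)} − k(k+1)/2`. -/
theorem statement4 (q : ℕ) (hq : 1 ≤ q)
    (δ c₂ d α β c₁ : ℝ)
    (hδ : δ = 3 / (2 * (Real.log 3 - Real.log 2)))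
    (hc₂ : c₂ = δ * (Real.log 4 + 2 * Real.log q) + δ + δ * Real.log 2 + 2)
    (hd0 : 0 < d) (hd1 : d < 1)
    (hα : α = Real.sqrt (1 / c₂))
    (hβ : β = (-1 - d) / (2 * c₂))
    (hc₁ : c₁ = max
      (Real.exp ((δ * Real.log 2 + 2) * (Real.log 4 + 2 * Real.log q)))
      (Real.exp (-(β + d * β + c₂ * β ^ 2))))
    (k : ℕ) (hk : 1 ≤ k) (hkd : 1 ≤ (k : ℝ) - (k : ℝ) ^ d) :
    ((k : ℝ) ^ d - 1) * ((k : ℝ) - (k : ℝ) ^ d) * c₁ *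
        ((k : ℝ) - (k : ℝ) ^ d) ^ (c₂ * Real.log ((k : ℝ) - (k : ℝ) ^ d)) -
      (k : ℝ) * ((k : ℝ) + 1) / 2
    ≤ ∑ i ∈ Finset.Icc 1 k, (i : ℝ) * (⌊c₁ * (i : ℝ) ^ (c₂ * Real.log i)⌋ : ℝ) := by
  have hq1 : (1:ℝ) ≤ (q:ℝ) := by exact_mod_cast hq
  have hlogq : 0 ≤ Real.log q := Real.log_nonneg hq1
  have hδpos : 0 < δ := by
    rw [hδ]
    apply div_pos (by norm_num)
    have : Real.log 2 < Real.log 3 := Real.log_lt_log (by norm_num) (by norm_num)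
    linarith
  have h4 : 0 ≤ Real.log 4 := Real.log_nonneg (by norm_num)
  have h2 : 0 ≤ Real.log 2 := Real.log_nonneg (by norm_num)
  have hc₂pos : 0 < c₂ := by nlinarith
  have hc₁pos : 0 < c₁ := by
    rw [hc₁]; exact lt_max_of_lt_left (Real.exp_pos _)
  set m : ℝ := (k:ℝ) - (k:ℝ) ^ d with hm
  clear_value m
  have hm1 : 1 ≤ m := hkd
  have hmpos : 0 < m := by linarith
  have hk1 : (1:ℝ) ≤ (k:ℝ) := by exact_mod_cast hk
  have hkd1 : 1 ≤ (k:ℝ) ^ d := Real.one_le_rpow hk1 hd0.le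
  -- monotonicity of x * (c₁ * x ^ (c₂ log x)) on [m, ∞)
  have key : ∀ x : ℝ, m ≤ x →
      m * (c₁ * m ^ (c₂ * Real.log m)) ≤ x * (c₁ * x ^ (c₂ * Real.log x)) := by
    intro x hx
    have hx1 : (1:ℝ) ≤ x := le_trans hm1 hx
    have hxpos : (0:ℝ) < x := by linarith
    have hlm : 0 ≤ Real.log m := Real.log_nonneg hm1
    have hll : Real.log m ≤ Real.log x := Real.log_le_log hmpos hx
    have h1 : m ^ (c₂ * Real.log m) ≤ x ^ (c₂ * Real.log x) := by
      rw [Real.rpow_def_of_pos hmpos, Real.rpow_def_of_pos hxpos]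
      apply Real.exp_le_exp.mpr
      nlinarith [mul_le_mul hll hll hlm (le_trans hlm hll), hc₂pos.le,
        mul_nonneg hc₂pos.le (mul_self_nonneg (Real.log x - Real.log m))]
    have hpow : 0 < m ^ (c₂ * Real.log m) := Real.rpow_pos_of_pos hmpos _
    nlinarith [mul_le_mul hx h1 hpow.le hxpos.le, hc₁pos.le,
      mul_le_mul_of_nonneg_left (mul_le_mul hx h1 hpow.le hxpos.le) hc₁pos.le]
  set n : ℕ := ⌈m⌉₊ with hn
  clear_value n
  have hn1 : 1 ≤ n := by rw [hn]; exact Nat.one_le_ceil_iff.mpr hmpos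
  have hnk : n ≤ k := by
    rw [hn]; exact Nat.ceil_le.mpr (by rw [hm]; linarith)
  have hmn : m ≤ (n:ℝ) := by rw [hn]; exact Nat.le_ceil m
  have hnm : (n:ℝ) < m + 1 := by rw [hn]; exact Nat.ceil_lt_add_one hmpos.le
  -- lower bound on the partial sum over Icc n k
  have hcard : ((Finset.Icc n k).card : ℝ) = (k:ℝ) + 1 - n := by
    rw [Nat.card_Icc]
    have : n ≤ k + 1 := by omega
    push_cast [Nat.cast_sub this]
    ring
  have hterm_nonneg : ∀ i ∈ Finset.Icc 1 k,
      0 ≤ (i:ℝ) * (c₁ * (i:ℝ) ^ (c₂ * Real.log i)) := by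
    intro i hi
    have : (0:ℝ) ≤ (i:ℝ) := Nat.cast_nonneg i
    positivity
  have hsub : Finset.Icc n k ⊆ Finset.Icc 1 k := Finset.Icc_subset_Icc hn1 le_rfl
  have hstep1 : ((Finset.Icc n k).card : ℝ) * (m * (c₁ * m ^ (c₂ * Real.log m)))
      ≤ ∑ i ∈ Finset.Icc 1 k, (i:ℝ) * (c₁ * (i:ℝ) ^ (c₂ * Real.log i)) := by
    have h1 : ((Finset.Icc n k).card : ℝ) * (m * (c₁ * m ^ (c₂ * Real.log m)))
        ≤ ∑ i ∈ Finset.Icc n k, (i:ℝ) * (c₁ * (i:ℝ) ^ (c₂ * Real.log i)) := by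
      have := Finset.card_nsmul_le_sum (Finset.Icc n k)
        (fun i => (i:ℝ) * (c₁ * (i:ℝ) ^ (c₂ * Real.log i)))
        (m * (c₁ * m ^ (c₂ * Real.log m)))
        (fun i hi => by
          apply key
          have hni : n ≤ i := (Finset.mem_Icc.mp hi).1
          exact le_trans hmn (by exact_mod_cast hni))
      simpa [nsmul_eq_mul] using this
    exact le_trans h1 (Finset.sum_le_sum_of_subset_of_nonneg hsub
      (fun i hi _ => hterm_nonneg i hi))
  -- floor bound
  have hfloor : ∑ i ∈ Finset.Icc 1 k, ((i:ℝ) * (c₁ * (i:ℝ) ^ (c₂ * Real.log i)) - (i:ℝ))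
      ≤ ∑ i ∈ Finset.Icc 1 k, (i : ℝ) * (⌊c₁ * (i : ℝ) ^ (c₂ * Real.log i)⌋ : ℝ) := by
    apply Finset.sum_le_sum
    intro i hi
    have hfl : c₁ * (i:ℝ) ^ (c₂ * Real.log i) - 1
        ≤ (⌊c₁ * (i : ℝ) ^ (c₂ * Real.log i)⌋ : ℝ) :=
      (Int.sub_one_lt_floor _).le
    have hi0 : (0:ℝ) ≤ (i:ℝ) := Nat.cast_nonneg i
    have h2 : (i:ℝ) * (c₁ * (i:ℝ) ^ (c₂ * Real.log i)) - (i:ℝ)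
        = (i:ℝ) * (c₁ * (i:ℝ) ^ (c₂ * Real.log i) - 1) := by ring
    rw [h2]
    exact mul_le_mul_of_nonneg_left hfl hi0
  have hgauss : ∑ i ∈ Finset.Icc 1 k, (i:ℝ) = (k:ℝ) * ((k:ℝ) + 1) / 2 := gauss_icc k
  have hsplit : ∑ i ∈ Finset.Icc 1 k, ((i:ℝ) * (c₁ * (i:ℝ) ^ (c₂ * Real.log i)) - (i:ℝ))
      = (∑ i ∈ Finset.Icc 1 k, (i:ℝ) * (c₁ * (i:ℝ) ^ (c₂ * Real.log i)))
        - (k:ℝ) * ((k:ℝ) + 1) / 2 := by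
    rw [Finset.sum_sub_distrib, hgauss]
  -- combine
  have hcount : (k:ℝ) ^ d - 1 ≤ ((Finset.Icc n k).card : ℝ) := by
    rw [hcard]; linarith
  have hmf : 0 ≤ m * (c₁ * m ^ (c₂ * Real.log m)) := by positivity
  have hmain : ((k : ℝ) ^ d - 1) * m * c₁ * m ^ (c₂ * Real.log m)
      ≤ ((Finset.Icc n k).card : ℝ) * (m * (c₁ * m ^ (c₂ * Real.log m)))  := by
    have h0 : 0 ≤ (k:ℝ) ^ d - 1 := by linarith
    calc ((k : ℝ) ^ d - 1) * m * c₁ * m ^ (c₂ * Real.log m)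
        = ((k:ℝ) ^ d - 1) * (m * (c₁ * m ^ (c₂ * Real.log m))) := by ring
      _ ≤ ((Finset.Icc n k).card : ℝ) * (m * (c₁ * m ^ (c₂ * Real.log m))) :=
          mul_le_mul_of_nonneg_right hcount hmf
  linarith [hstep1, hfloor, hsplit.ge, hsplit.le]
end

section
/- Let γ = β + ln c₁ + c₂β² and σ(n) = α√(ln n) + β. Then for every positive integer n, ∑_{i=1}^{⌊e^{σ(n)}⌋} c₁ i^{c₂ ln i} ≤ e^{γ} · n / e^{dα√(ln n)}. -/
/-- With the constants `δ, c₂, d, α, β, c₁` of the paper (for alphabet size `q ≥ 1`),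
setting `γ = β + ln c₁ + c₂β²` and `σ(n) = α√(ln n) + β`, for every positive
integer `n` we have `∑_{i=1}^{⌊e^{σ(n)}⌋} c₁ i^{c₂ ln i} ≤ e^γ · n / e^{dα√(ln n)}`. -/
theorem statement8 (q : ℕ) (hq : 1 ≤ q)
    (δ c₂ d α β c₁ γ : ℝ)
    (hδ : δ = 3 / (2 * (Real.log 3 - Real.log 2)))
    (hc₂ : c₂ = δ * (Real.log 4 + 2 * Real.log q) + δ + δ * Real.log 2 + 2)
    (hd0 : 0 < d) (hd1 : d < 1)
    (hα : α = Real.sqrt (1 / c₂))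
    (hβ : β = (-1 - d) / (2 * c₂))
    (hc₁ : c₁ = max
      (Real.exp ((δ * Real.log 2 + 2) * (Real.log 4 + 2 * Real.log q)))
      (Real.exp (-(β + d * β + c₂ * β ^ 2))))
    (hγ : γ = β + Real.log c₁ + c₂ * β ^ 2)
    (σ : ℕ → ℝ) (hσ : ∀ n : ℕ, σ n = α * Real.sqrt (Real.log n) + β)
    (n : ℕ) (hn : 1 ≤ n) :
    ∑ i ∈ Finset.Icc 1 ⌊Real.exp (σ n)⌋₊, c₁ * (i : ℝ) ^ (c₂ * Real.log i) ≤
      Real.exp γ * n / Real.exp (d * α * Real.sqrt (Real.log n)) := by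
  have hq1 : (1 : ℝ) ≤ (q : ℝ) := by exact_mod_cast hq
  have hlogq : 0 ≤ Real.log q := Real.log_nonneg hq1
  have hlog2 : 0 ≤ Real.log 2 := Real.log_nonneg (by norm_num)
  have hlog4 : 0 ≤ Real.log 4 := Real.log_nonneg (by norm_num)
  have hδpos : 0 < δ := by
    rw [hδ]
    have : Real.log 2 < Real.log 3 := Real.log_lt_log (by norm_num) (by norm_num)
    exact div_pos (by norm_num) (by linarith)
  have hc₂pos : 0 < c₂ := by
    rw [hc₂]; nlinarith
  have hc₁pos : 0 < c₁ :=
    lt_of_lt_of_le (Real.exp_pos _) (hc₁ ▸ le_max_left _ _)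
  set x := Real.sqrt (Real.log n) with hxdef
  have hx0 : 0 ≤ x := Real.sqrt_nonneg _
  have hn1 : (1 : ℝ) ≤ (n : ℝ) := by exact_mod_cast hn
  have hlogn : 0 ≤ Real.log n := Real.log_nonneg hn1
  have hx2 : x ^ 2 = Real.log n := Real.sq_sqrt hlogn
  have hα2 : c₂ * α ^ 2 = 1 := by
    rw [hα, Real.sq_sqrt (by positivity : (0:ℝ) ≤ 1 / c₂)]
    field_simp
  have hβ2 : 2 * c₂ * β = -1 - d := by
    rw [hβ]; field_simp
  set s := σ n with hsdef
  have hs : s = α * x + β := hσ n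
  set m := ⌊Real.exp s⌋₊ with hmdef
  have hm : (m : ℝ) ≤ Real.exp s := Nat.floor_le (Real.exp_pos _).le
  -- bound each term
  have hterm : ∀ i ∈ Finset.Icc 1 m,
      c₁ * (i : ℝ) ^ (c₂ * Real.log i) ≤ c₁ * Real.exp (c₂ * s ^ 2) := by
    intro i hi
    simp only [Finset.mem_Icc] at hi
    have hi1 : (1 : ℝ) ≤ (i : ℝ) := by exact_mod_cast hi.1
    have hli0 : 0 ≤ Real.log i := Real.log_nonneg hi1
    have him : (i : ℝ) ≤ Real.exp s := le_trans (by exact_mod_cast hi.2) hm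
    have hlis : Real.log i ≤ s := by
      have := Real.log_le_log (by linarith) him
      rwa [Real.log_exp] at this
    have hrw : (i : ℝ) ^ (c₂ * Real.log i) =
        Real.exp (c₂ * Real.log i * Real.log i) := by
      rw [Real.rpow_def_of_pos (by linarith)]
      ring_nf
    rw [hrw]
    have hsq : Real.log i * Real.log i ≤ s * s :=
      mul_le_mul hlis hlis hli0 (hli0.trans hlis)
    have : c₂ * Real.log i * Real.log i ≤ c₂ * s ^ 2 := by nlinarith
    exact mul_le_mul_of_nonneg_left (Real.exp_le_exp.2 this) hc₁pos.le
  have hsum : ∑ i ∈ Finset.Icc 1 m, c₁ * (i : ℝ) ^ (c₂ * Real.log i) ≤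
      (m : ℝ) * (c₁ * Real.exp (c₂ * s ^ 2)) := by
    calc ∑ i ∈ Finset.Icc 1 m, c₁ * (i : ℝ) ^ (c₂ * Real.log i)
        ≤ ∑ _i ∈ Finset.Icc 1 m, c₁ * Real.exp (c₂ * s ^ 2) :=
          Finset.sum_le_sum hterm
      _ = (m : ℝ) * (c₁ * Real.exp (c₂ * s ^ 2)) := by
          rw [Finset.sum_const, Nat.card_Icc]
          simp [mul_comm]
  have hsum2 : (m : ℝ) * (c₁ * Real.exp (c₂ * s ^ 2)) ≤
      Real.exp (Real.log c₁ + s + c₂ * s ^ 2) := by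
    have h1 : (m : ℝ) * (c₁ * Real.exp (c₂ * s ^ 2)) ≤
        Real.exp s * (c₁ * Real.exp (c₂ * s ^ 2)) :=
      mul_le_mul_of_nonneg_right hm (by positivity)
    have h2 : Real.exp s * (c₁ * Real.exp (c₂ * s ^ 2)) =
        Real.exp (Real.log c₁ + s + c₂ * s ^ 2) := by
      rw [Real.exp_add, Real.exp_add, Real.exp_log hc₁pos]
      ring
    exact le_of_le_of_eq h1 h2
  have hexpo : Real.log c₁ + s + c₂ * s ^ 2 = γ + Real.log n - d * α * x := by
    rw [hs, hγ, ← hx2]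
    linear_combination x ^ 2 * hα2 + α * x * hβ2
  have hrhs : Real.exp γ * n / Real.exp (d * α * x) =
      Real.exp (γ + Real.log n - d * α * x) := by
    rw [Real.exp_sub, Real.exp_add, Real.exp_log (by linarith : (0:ℝ) < (n:ℝ))]
  rw [hrhs]
  calc ∑ i ∈ Finset.Icc 1 m, c₁ * (i : ℝ) ^ (c₂ * Real.log i)
      ≤ Real.exp (Real.log c₁ + s + c₂ * s ^ 2) := le_trans hsum hsum2
    _ = Real.exp (γ + Real.log n - d * α * x) := by rw [hexpo]
end
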